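/- arXiv:1309.3114 — 9 statements merged into one kernel-verified Lean document; each statement's English description precedes it below -/
import Mathlib

section
/- Let Γ be a countable group acting by homeomorphisms on a Cantor space X, and assume that for every nonempty open set U ⊆ X there exist distinct points x, y ∈ U and γ ∈ Γ with γ·x = y. Then the set Ω = {x ∈ X : x is an accumulation point of the orbit Γ·x} is a dense Gδ subset of X. -/
open Set

/-- Lemma 3.1: for a countable group acting by homeomorphisms on a Cantor space such that
the restriction of the orbit equivalence relation to no nonempty open set is trivial,
the set of points that are accumulation points of their own orbit is a dense Gδ. -/
theorem accumulation_points_dense_Gdelta {X : Type*} [TopologicalSpace X] [Nonempty X] [CompactSpace X]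
    [TopologicalSpace.MetrizableSpace X] [TotallyDisconnectedSpace X] [PerfectSpace X]
    (Γ : Type*) [Group Γ] [Countable Γ] [MulAction Γ X] [ContinuousConstSMul Γ X]
    (hact : ∀ U : Set X, IsOpen U → U.Nonempty →
      ∃ x ∈ U, ∃ y ∈ U, x ≠ y ∧ ∃ γ : Γ, γ • x = y) :
    Dense {x : X | x ∈ closure (MulAction.orbit Γ x \ {x})} ∧
      IsGδ {x : X | x ∈ closure (MulAction.orbit Γ x \ {x})} := by
  letI : MetricSpace X := TopologicalSpace.metrizableSpaceMetric X
  have key : {x : X | x ∈ closure (MulAction.orbit Γ x \ {x})} =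
      ⋂ n : ℕ, ⋃ γ : Γ, {x : X | γ • x ≠ x ∧ dist (γ • x) x < 1 / (n + 1)} := by
    ext x
    simp only [mem_setOf_eq, mem_iInter, mem_iUnion, Metric.mem_closure_iff]
    constructor
    · intro h n
      obtain ⟨y, ⟨⟨γ, rfl⟩, hy2⟩, hd⟩ := h (1 / (n + 1)) (by positivity)
      exact ⟨γ, by simpa using hy2, by rwa [dist_comm]⟩
    · intro h ε hε
      obtain ⟨n, hn⟩ := exists_nat_one_div_lt hε
      obtain ⟨γ, hne, hd⟩ := h n
      exact ⟨γ • x, ⟨⟨γ, rfl⟩, by simpa using hne⟩,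
        by rw [dist_comm]; exact hd.trans hn⟩
  have hopen : ∀ n : ℕ, IsOpen (⋃ γ : Γ, {x : X | γ • x ≠ x ∧ dist (γ • x) x < 1 / (n + 1)}) := by
    intro n
    refine isOpen_iUnion fun γ => ?_
    exact (isOpen_ne_fun (continuous_const_smul γ) continuous_id).inter
      (isOpen_lt ((continuous_const_smul γ).dist continuous_id) continuous_const)
  have hdense : ∀ n : ℕ, Dense (⋃ γ : Γ, {x : X | γ • x ≠ x ∧ dist (γ • x) x < 1 / (n + 1)}) := by
    intro n
    rw [dense_iff_inter_open]
    intro O hO ⟨x₀, hx₀⟩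
    set r : ℝ := 1 / (2 * (n + 1)) with hr
    have hrpos : 0 < r := by positivity
    have hU : (O ∩ Metric.ball x₀ r).Nonempty := ⟨x₀, hx₀, Metric.mem_ball_self hrpos⟩
    obtain ⟨a, ha, b, hb, hab, γ, hγ⟩ := hact _ (hO.inter Metric.isOpen_ball) hU
    refine ⟨a, ha.1, mem_iUnion.2 ⟨γ, ?_, ?_⟩⟩
    · rw [hγ]; exact fun h => hab h.symm
    · rw [hγ]
      calc dist b a ≤ dist b x₀ + dist x₀ a := dist_triangle _ _ _
        _ < r + r := add_lt_add hb.2 (by rw [dist_comm]; exact ha.2)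
        _ = 1 / (n + 1) := by rw [hr]; field_simp; norm_num
  rw [key]
  exact ⟨dense_iInter_of_isOpen hopen hdense, IsGδ.iInter_of_isOpen hopen⟩
end

section
/- Let Γ be a countable group acting by homeomorphisms on a Cantor space X such that for every nonempty open set U ⊆ X there exist distinct points x, y ∈ U and γ ∈ Γ with γ·x = y, and let [R] be the full group of the action. Let τ be a group topology on [R] which is Hausdorff and for which [R] is a Baire space. Then for every nonempty clopen subset U of X, the set Ω_U = {g ∈ [R] : g(x) = x for all x ∈ U} is τ-closed. -/
open Set

section HomeoGroupSetup

variable {X : Type*} [TopologicalSpace X]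

/-- The group structure on the homeomorphism group of `X`,
with `(f * g) x = f (g x)`. -/
instance : Group (X ≃ₜ X) where
  mul f g := g.trans f
  one := Homeomorph.refl X
  inv := Homeomorph.symm
  mul_assoc _ _ _ := Homeomorph.ext fun _ => rfl
  one_mul _ := Homeomorph.ext fun _ => rfl
  mul_one _ := Homeomorph.ext fun _ => rfl
  inv_mul_cancel f := Homeomorph.ext fun x => f.symm_apply_apply x

@[simp] lemma Homeomorph.mul_apply' (f g : X ≃ₜ X) (x : X) : (f * g) x = f (g x) := rfl

end HomeoGroupSetup


section FullGroupGamma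

/-- The full group of an action of a group `Γ` by homeomorphisms on `X`: all
homeomorphisms `g` of `X` such that every `g x` lies in the `Γ`-orbit of `x`. -/
def fullGroup (Γ : Type*) [Group Γ] (X : Type*) [TopologicalSpace X] [MulAction Γ X] :
    Subgroup (X ≃ₜ X) where
  carrier := {g : X ≃ₜ X | ∀ x : X, ∃ γ : Γ, g x = γ • x}
  one_mem' := fun x => ⟨1, (one_smul Γ x).symm⟩
  mul_mem' := by
    intro a b ha hb x
    obtain ⟨γ, hγ⟩ := hb x
    obtain ⟨δ, hδ⟩ := ha (b x)
    refine ⟨δ * γ, ?_⟩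
    show a (b x) = (δ * γ) • x
    rw [hδ, hγ, mul_smul]
  inv_mem' := by
    intro a ha x
    obtain ⟨γ, hγ⟩ := ha ((a⁻¹ : X ≃ₜ X) x)
    have hx : a ((a⁻¹ : X ≃ₜ X) x) = x := a.apply_symm_apply x
    rw [hx] at hγ
    exact ⟨γ⁻¹, eq_inv_smul_iff.mpr hγ.symm⟩

end FullGroupGamma



section SwapHelper

open Classical in
/-- Swap `V` and `φ '' V` via `φ`, identity elsewhere. -/
noncomputable def clopenSwap {X : Type*} [TopologicalSpace X] (φ : X ≃ₜ X) (V : Set X) :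
    X → X :=
  fun x => if x ∈ V then φ x else if x ∈ φ '' V then φ.symm x else x

variable {X : Type*} [TopologicalSpace X] (φ : X ≃ₜ X) {V : Set X}

lemma clopenSwap_of_mem {x : X} (hx : x ∈ V) : clopenSwap φ V x = φ x := by
  simp [clopenSwap, hx]

lemma clopenSwap_of_mem_image {x : X} (hx : x ∈ φ '' V) (hx' : x ∉ V) :
    clopenSwap φ V x = φ.symm x := by
  simp [clopenSwap, hx, hx']

lemma clopenSwap_of_not_mem {x : X} (hx : x ∉ V) (hx' : x ∉ φ '' V) :
    clopenSwap φ V x = x := by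
  simp [clopenSwap, hx, hx']

lemma clopenSwap_involutive (hdisj : Disjoint V (φ '' V)) :
    Function.Involutive (clopenSwap φ V) := by
  intro x
  by_cases hx : x ∈ V
  · rw [clopenSwap_of_mem φ hx]
    have h1 : φ x ∈ φ '' V := Set.mem_image_of_mem φ hx
    have h2 : φ x ∉ V := fun h => (hdisj.ne_of_mem h h1) rfl
    rw [clopenSwap_of_mem_image φ h1 h2, φ.symm_apply_apply]
  · by_cases hx' : x ∈ φ '' V
    · rw [clopenSwap_of_mem_image φ hx' hx]
      have h1 : φ.symm x ∈ V := by
        obtain ⟨y, hy, rfl⟩ := hx'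
        rwa [φ.symm_apply_apply]
      rw [clopenSwap_of_mem φ h1, φ.apply_symm_apply]
    · rw [clopenSwap_of_not_mem φ hx hx', clopenSwap_of_not_mem φ hx hx']

lemma clopenSwap_continuous (hV : IsClopen V) : Continuous (clopenSwap φ V) := by
  classical
  have hVi : IsClopen (φ '' V) := by
    have : φ '' V = φ.symm ⁻¹' V := Equiv.image_eq_preimage_symm φ.toEquiv V
    rw [this]
    exact hV.preimage φ.symm.continuous
  unfold clopenSwap
  apply Continuous.if
  · intro a ha
    rw [show {x : X | x ∈ V} = V from rfl, hV.frontier_eq] at ha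
    exact absurd ha (Set.notMem_empty a)
  · exact φ.continuous
  · apply Continuous.if
    · intro a ha
      rw [show {x : X | x ∈ φ '' V} = φ '' V from rfl, hVi.frontier_eq] at ha
      exact absurd ha (Set.notMem_empty a)
    · exact φ.symm.continuous
    · exact continuous_id

/-- The homeomorphism swapping `V` and `φ '' V` via `φ`, identity elsewhere. -/
noncomputable def clopenSwapHomeo (hV : IsClopen V) (hdisj : Disjoint V (φ '' V)) :
    X ≃ₜ X where
  toFun := clopenSwap φ V
  invFun := clopenSwap φ V
  left_inv := clopenSwap_involutive φ hdisj
  right_inv := clopenSwap_involutive φ hdisj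
  continuous_toFun := clopenSwap_continuous φ hV
  continuous_invFun := clopenSwap_continuous φ hV

@[simp] lemma clopenSwapHomeo_apply (hV : IsClopen V) (hdisj : Disjoint V (φ '' V)) (x : X) :
    clopenSwapHomeo φ hV hdisj x = clopenSwap φ V x := rfl

end SwapHelper

/-- Lemma 3.2: for any Hausdorff Baire group topology `τ` on the full group and any
nonempty clopen `U ⊆ X`, the set of elements fixing `U` pointwise is `τ`-closed. -/
theorem pointwise_fixing_closed {X : Type*} [TopologicalSpace X] [Nonempty X] [CompactSpace X]
    [TopologicalSpace.MetrizableSpace X] [TotallyDisconnectedSpace X] [PerfectSpace X]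
    (Γ : Type*) [Group Γ] [Countable Γ] [MulAction Γ X] [ContinuousConstSMul Γ X]
    (hact : ∀ U : Set X, IsOpen U → U.Nonempty →
      ∃ x ∈ U, ∃ y ∈ U, x ≠ y ∧ ∃ γ : Γ, γ • x = y)
    (τ : TopologicalSpace ↥(fullGroup Γ X))
    (hgrp : @IsTopologicalGroup ↥(fullGroup Γ X) τ _)
    (hT2 : @T2Space ↥(fullGroup Γ X) τ)
    (hBaire : @BaireSpace ↥(fullGroup Γ X) τ)
    (U : Set X) (hU : IsClopen U) (hUne : U.Nonempty) :
    @IsClosed ↥(fullGroup Γ X) τ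
      {g : ↥(fullGroup Γ X) | ∀ x ∈ U, (g : X ≃ₜ X) x = x} := by
  classical
  letI : TopologicalSpace ↥(fullGroup Γ X) := τ
  haveI := hgrp
  haveI := hT2
  haveI : T2Space X := TopologicalSpace.t2Space_of_metrizableSpace
  have key : {g : ↥(fullGroup Γ X) | ∀ x ∈ U, (g : X ≃ₜ X) x = x}
      = ⋂ h ∈ {h : ↥(fullGroup Γ X) | ∀ x ∈ Uᶜ, (h : X ≃ₜ X) x = x}, {g : ↥(fullGroup Γ X) | g * h = h * g} := by
    ext g
    simp only [Set.mem_iInter, Set.mem_setOf_eq]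
    constructor
    · -- g fixes U pointwise ⟹ g commutes with everything fixing Uᶜ pointwise
      intro hg h hh
      have hg' : ∀ x : X, x ∉ U → (g : X ≃ₜ X) x ∉ U := by
        intro x hx hgx
        have h2 : (g : X ≃ₜ X) x = x := (g : X ≃ₜ X).injective (hg _ hgx)
        rw [h2] at hgx
        exact hx hgx
      have hh' : ∀ x : X, x ∈ U → (h : X ≃ₜ X) x ∈ U := by
        intro x hx
        by_contra hhx
        have h2 : (h : X ≃ₜ X) x = x := (h : X ≃ₜ X).injective (hh _ hhx)
        rw [h2] at hhx
        exact hhx hx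
      ext x
      show ((g * h : ↥(fullGroup Γ X)) : X ≃ₜ X) x = ((h * g : ↥(fullGroup Γ X)) : X ≃ₜ X) x
      rw [Subgroup.coe_mul, Subgroup.coe_mul, Homeomorph.mul_apply', Homeomorph.mul_apply']
      by_cases hx : x ∈ U
      · rw [hg _ (hh' x hx), hg _ hx]
      · rw [hh _ hx, hh _ (hg' x hx)]
    · -- converse, by contradiction using a swap supported in U
      intro hg x hxU
      by_contra hne
      -- separate x from g x
      obtain ⟨O₁, O₂, hO₁, hO₂, hxO₁, hgxO₂, hdis⟩ := t2_separation (Ne.symm hne)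
      obtain ⟨W, hW, hxW, hWsub⟩ := compact_exists_isClopen_in_isOpen
        (((hU.2.inter hO₁).inter (hO₂.preimage (g : X ≃ₜ X).continuous)) : IsOpen
          ((U ∩ O₁) ∩ (g : X ≃ₜ X) ⁻¹' O₂))
        ⟨⟨hxU, hxO₁⟩, hgxO₂⟩
      have hWU : W ⊆ U := fun y hy => (hWsub hy).1.1
      have hWO₁ : W ⊆ O₁ := fun y hy => (hWsub hy).1.2
      have hWgO₂ : ∀ y ∈ W, (g : X ≃ₜ X) y ∈ O₂ := fun y hy => (hWsub hy).2
      -- find two points in W related by Γ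
      obtain ⟨a, haW, b, hbW, hab, γ, hγ⟩ := hact W hW.2 ⟨x, hxW⟩
      set φ : X ≃ₜ X := Homeomorph.smul γ with hφ
      have hφa : φ a = b := hγ
      -- separate a from b, with a small clopen V ∋ a, φ '' V ⊆ W, disjoint from V
      obtain ⟨P₁, P₂, hP₁, hP₂, haP₁, hbP₂, hPdis⟩ := t2_separation hab
      obtain ⟨V, hV, haV, hVsub⟩ := compact_exists_isClopen_in_isOpen
        (((hW.2.inter hP₁).inter ((hW.2.inter hP₂).preimage φ.continuous)) : IsOpen
          ((W ∩ P₁) ∩ φ ⁻¹' (W ∩ P₂))) ⟨⟨haW, haP₁⟩, by simp only [Set.mem_preimage, hφa]; exact ⟨hbW, hbP₂⟩⟩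
      have hVW : V ⊆ W := fun y hy => (hVsub hy).1.1
      have hVP₁ : V ⊆ P₁ := fun y hy => (hVsub hy).1.2
      have hφVW : φ '' V ⊆ W := by rintro _ ⟨y, hy, rfl⟩; exact (hVsub hy).2.1
      have hφVP₂ : φ '' V ⊆ P₂ := by rintro _ ⟨y, hy, rfl⟩; exact (hVsub hy).2.2
      have hdisj : Disjoint V (φ '' V) := Set.disjoint_of_subset hVP₁ hφVP₂ hPdis
      -- the swap homeomorphism, supported in W ⊆ U
      set h₀ : X ≃ₜ X := clopenSwapHomeo φ hV hdisj with hh₀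
      have hmem : h₀ ∈ fullGroup Γ X := by
        intro z
        by_cases hz : z ∈ V
        · exact ⟨γ, by rw [hh₀, clopenSwapHomeo_apply, clopenSwap_of_mem φ hz]; rfl⟩
        · by_cases hz' : z ∈ φ '' V
          · exact ⟨γ⁻¹, by
              rw [hh₀, clopenSwapHomeo_apply, clopenSwap_of_mem_image φ hz' hz]; rfl⟩
          · exact ⟨1, by
              rw [hh₀, clopenSwapHomeo_apply, clopenSwap_of_not_mem φ hz hz', one_smul]⟩
      have hfix : ∀ z ∈ Uᶜ, h₀ z = z := by
        intro z hz
        have hz1 : z ∉ V := fun h => hz (hWU (hVW h))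
        have hz2 : z ∉ φ '' V := fun h => hz (hWU (hφVW h))
        rw [hh₀, clopenSwapHomeo_apply, clopenSwap_of_not_mem φ hz1 hz2]
      have hcomm := hg ⟨h₀, hmem⟩ hfix
      have heval : (g : X ≃ₜ X) (h₀ a) = h₀ ((g : X ≃ₜ X) a) := by
        have := congrArg (fun k : ↥(fullGroup Γ X) => ((k : X ≃ₜ X) : X → X) a) hcomm
        simpa using this
      -- compute both sides
      have hga : (g : X ≃ₜ X) a ∉ W := fun h =>
        (hdis.ne_of_mem (hWO₁ h) (hWgO₂ a haW)) rfl
      have h1 : h₀ a = b := by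
        rw [hh₀, clopenSwapHomeo_apply, clopenSwap_of_mem φ haV, hφa]
      have h2 : h₀ ((g : X ≃ₜ X) a) = (g : X ≃ₜ X) a := by
        rw [hh₀, clopenSwapHomeo_apply,
          clopenSwap_of_not_mem φ (fun h => hga (hVW h)) (fun h => hga (hφVW h))]
      rw [h1, h2] at heval
      exact hab ((g : X ≃ₜ X).injective heval).symm
  rw [key]
  exact isClosed_biInter fun h _ =>
    isClosed_eq (continuous_mul_right h) (continuous_mul_left h)
end

section
/- Let Γ be a countable group acting by homeomorphisms on a Cantor space X such that for every nonempty open set U ⊆ X there exist distinct points x, y ∈ U and γ ∈ Γ with γ·x = y, and let [R] be the full group of the action. Let τ be a group topology on [R] which is Hausdorff and for which [R] is a Baire space. Then for every point x ∈ X, the set {g ∈ [R] : g(x) = x} is both τ-closed and τ-open. -/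
open Set

section AuxDyn

open scoped Classical Pointwise

variable {X : Type*} [TopologicalSpace X]
variable {Γ : Type*} [Group Γ] [MulAction Γ X] [ContinuousConstSMul Γ X]

/-- Swap `A` and `γ • A` via the action of `γ`, identity elsewhere. -/
noncomputable def swapFun (γ : Γ) (A : Set X) (z : X) : X :=
  if z ∈ A then γ • z else if z ∈ γ • A then γ⁻¹ • z else z

lemma swapFun_involutive {γ : Γ} {A : Set X} (hd : ∀ z ∈ A, γ • z ∉ A) :
    Function.Involutive (swapFun γ A) := by
  intro z
  by_cases h1 : z ∈ A
  · have h2 : γ • z ∈ γ • A := smul_mem_smul_set h1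
    have h3 : γ • z ∉ A := hd z h1
    simp only [swapFun, if_pos h1, if_neg h3, if_pos h2, inv_smul_smul]
  · by_cases h2 : z ∈ γ • A
    · obtain ⟨w, hw, rfl⟩ := h2
      have h4 : γ⁻¹ • (γ • w) = w := inv_smul_smul γ w
      have h2' : γ • w ∈ γ • A := smul_mem_smul_set hw
      simp only [swapFun, if_neg h1, if_pos h2', h4, if_pos hw]
    · simp only [swapFun, if_neg h1, if_neg h2]

lemma swapFun_continuous {γ : Γ} {A : Set X} (hA : IsClopen A) :
    Continuous (swapFun γ A) := by
  have hA2 : IsClopen (γ • A) := by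
    have : γ • A = (fun z : X => γ⁻¹ • z) ⁻¹' A := by rw [preimage_smul, inv_inv]
    rw [this]
    exact hA.preimage (continuous_const_smul _)
  unfold swapFun
  apply Continuous.if
  · intro a ha
    have : frontier A = ∅ := hA.frontier_eq
    rw [show {x : X | x ∈ A} = A from rfl, this] at ha
    exact absurd ha (notMem_empty a)
  · exact continuous_const_smul γ
  · apply Continuous.if
    · intro a ha
      have : frontier (γ • A) = ∅ := hA2.frontier_eq
      rw [show {x : X | x ∈ γ • A} = γ • A from rfl, this] at ha
      exact absurd ha (notMem_empty a)
    · exact continuous_const_smul γ⁻¹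
    · exact continuous_id

/-- The swap homeomorphism. -/
noncomputable def swapHomeo (γ : Γ) (A : Set X) (hA : IsClopen A)
    (hd : ∀ z ∈ A, γ • z ∉ A) : X ≃ₜ X where
  toFun := swapFun γ A
  invFun := swapFun γ A
  left_inv := swapFun_involutive hd
  right_inv := swapFun_involutive hd
  continuous_toFun := swapFun_continuous hA
  continuous_invFun := swapFun_continuous hA

lemma swapHomeo_apply_mem {γ : Γ} {A : Set X} (hA : IsClopen A)
    (hd : ∀ z ∈ A, γ • z ∉ A) {z : X} (hz : z ∈ A) :
    swapHomeo γ A hA hd z = γ • z := by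
  show swapFun γ A z = γ • z
  simp only [swapFun, if_pos hz]

lemma swapHomeo_apply_not {γ : Γ} {A : Set X} (hA : IsClopen A)
    (hd : ∀ z ∈ A, γ • z ∉ A) {z : X} (h1 : z ∉ A) (h2 : z ∉ γ • A) :
    swapHomeo γ A hA hd z = z := by
  show swapFun γ A z = z
  simp only [swapFun, if_neg h1, if_neg h2]

lemma swapHomeo_mem_fullGroup {γ : Γ} {A : Set X} (hA : IsClopen A)
    (hd : ∀ z ∈ A, γ • z ∉ A) :
    swapHomeo γ A hA hd ∈ fullGroup Γ X := by
  intro z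
  by_cases h1 : z ∈ A
  · exact ⟨γ, swapHomeo_apply_mem hA hd h1⟩
  · by_cases h2 : z ∈ γ • A
    · refine ⟨γ⁻¹, ?_⟩
      show swapFun γ A z = γ⁻¹ • z
      simp only [swapFun, if_neg h1, if_pos h2]
    · exact ⟨1, by rw [swapHomeo_apply_not hA hd h1 h2, one_smul]⟩

variable [T2Space X] [CompactSpace X] [TotallyDisconnectedSpace X]

/-- In every nonempty open set there is a nontrivial element of the full group
supported inside it. -/
lemma exists_mover
    (hact : ∀ U : Set X, IsOpen U → U.Nonempty →
      ∃ x ∈ U, ∃ y ∈ U, x ≠ y ∧ ∃ γ : Γ, γ • x = y)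
    {W : Set X} (hW : IsOpen W) (hne : W.Nonempty) :
    ∃ h : ↥(fullGroup Γ X), (∃ w ∈ W, (h : X ≃ₜ X) w ≠ w) ∧
      ∀ z, z ∉ W → (h : X ≃ₜ X) z = z := by
  obtain ⟨p, hp, q, hq, hpq, γ, hγ⟩ := hact W hW hne
  obtain ⟨O, O', hO, hO', hpO, hqO', hOO'⟩ := t2_separation hpq
  have hNopen : IsOpen (W ∩ O ∩ (fun z => γ • z) ⁻¹' (W ∩ O')) :=
    ((hW.inter hO).inter (((hW.inter hO').preimage (continuous_const_smul γ))))
  have hpN : p ∈ W ∩ O ∩ (fun z => γ • z) ⁻¹' (W ∩ O') := by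
    refine ⟨⟨hp, hpO⟩, ?_⟩
    show γ • p ∈ W ∩ O'
    rw [hγ]; exact ⟨hq, hqO'⟩
  obtain ⟨A, hA, hpA, hAN⟩ := compact_exists_isClopen_in_isOpen hNopen hpN
  have hAW : A ⊆ W := fun z hz => ((hAN hz).1).1
  have hγAW : γ • A ⊆ W := by
    rintro _ ⟨a, ha, rfl⟩
    exact ((hAN ha).2).1
  have hd : ∀ z ∈ A, γ • z ∉ A := by
    intro z hz hmem
    have h1 : γ • z ∈ O' := ((hAN hz).2).2
    have h2 : γ • z ∈ O := ((hAN hmem).1).2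
    exact (Set.disjoint_iff.mp hOO' ⟨h2, h1⟩)
  refine ⟨⟨swapHomeo γ A hA hd, swapHomeo_mem_fullGroup hA hd⟩, ⟨p, hp, ?_⟩, ?_⟩
  · rw [swapHomeo_apply_mem hA hd hpA, hγ]
    exact hpq.symm
  · intro z hz
    exact swapHomeo_apply_not hA hd (fun h => hz (hAW h)) (fun h => hz (hγAW h))

/-- If an element commutes with everything supported in an open set `V`,
then it fixes `V` pointwise. -/
lemma fixed_of_commute
    (hact : ∀ U : Set X, IsOpen U → U.Nonempty →
      ∃ x ∈ U, ∃ y ∈ U, x ≠ y ∧ ∃ γ : Γ, γ • x = y)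
    {V : Set X} (hV : IsOpen V) (F : X ≃ₜ X)
    (hcomm : ∀ k : ↥(fullGroup Γ X), (∀ z, z ∉ V → (k : X ≃ₜ X) z = z) →
      F * (k : X ≃ₜ X) = (k : X ≃ₜ X) * F)
    {z : X} (hz : z ∈ V) : F z = z := by
  by_contra hFz
  obtain ⟨O, O', hO, hO', hzO, hFzO', hOO'⟩ := t2_separation (fun h : z = F z => hFz h.symm)
  -- B := V ∩ O ∩ F ⁻¹' O'
  set B := V ∩ O ∩ F ⁻¹' O' with hBdef
  have hBopen : IsOpen B := (hV.inter hO).inter (hO'.preimage F.continuous)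
  have hzB : z ∈ B := ⟨⟨hz, hzO⟩, hFzO'⟩
  obtain ⟨k, ⟨w, hwB, hkw⟩, hksupp⟩ := exists_mover hact hBopen ⟨z, hzB⟩
  have hkV : ∀ u, u ∉ V → (k : X ≃ₜ X) u = u := fun u hu =>
    hksupp u (fun h => hu h.1.1)
  have heq := hcomm k hkV
  -- evaluate at w : F (k w) = k (F w)
  have hev : F ((k : X ≃ₜ X) w) = (k : X ≃ₜ X) (F w) := by
    have := congrArg (fun (g : X ≃ₜ X) => g w) heq
    simpa using this
  have hFwB : F w ∉ B := by
    intro hmem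
    have h1 : F w ∈ O' := hwB.2
    have h2 : F w ∈ O := hmem.1.2
    exact Set.disjoint_iff.mp hOO' ⟨h2, h1⟩
  rw [hksupp (F w) hFwB] at hev
  exact hkw (F.injective hev)

lemma commute_of_disjoint_supp (a b : X ≃ₜ X) (U : Set X)
    (ha : ∀ z, z ∉ U → a z = z) (hb : ∀ z, z ∈ U → b z = z) : a * b = b * a := by
  have haU : ∀ z ∈ U, a z ∈ U := by
    intro z hz
    by_contra h
    have h2 : a (a z) = a z := ha (a z) h
    have := a.injective h2
    rw [this] at h
    exact h hz
  have hbU : ∀ z, z ∉ U → b z ∉ U := by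
    intro z hz
    by_contra h
    have h2 : b (b z) = b z := hb (b z) h
    have := b.injective h2
    rw [this] at h
    exact hz h
  apply Homeomorph.ext
  intro z
  show a (b z) = b (a z)
  by_cases hz : z ∈ U
  · rw [hb z hz, hb (a z) (haU z hz)]
  · rw [ha z hz, ha (b z) (hbU z hz)]

end AuxDyn

section CountClopen

lemma countable_clopens (X : Type*) [TopologicalSpace X] [CompactSpace X]
    [SecondCountableTopology X] :
    {V : Set X | IsClopen V}.Countable := by
  classical
  obtain ⟨B, hBc, -, hBbasis⟩ := TopologicalSpace.exists_countable_basis X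
  have : {V : Set X | IsClopen V} ⊆ Set.sUnion '' {S | S.Finite ∧ S ⊆ B} := by
    intro C hC
    have hCopen : IsOpen C := hC.2
    have hCcomp : IsCompact C := hC.1.isCompact
    have hcover : C ⊆ ⋃ b ∈ {b ∈ B | b ⊆ C}, b := by
      intro u hu
      obtain ⟨b, hbB, hub, hbC⟩ := hBbasis.exists_subset_of_mem_open hu hCopen
      exact Set.mem_biUnion ⟨hbB, hbC⟩ hub
    obtain ⟨S, hSsub, hSfin, hScover⟩ := hCcomp.elim_finite_subcover_image
      (fun b hb => hBbasis.isOpen hb.1) hcover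
    refine ⟨S, ⟨hSfin, fun s hs => (hSsub hs).1⟩, ?_⟩
    apply Set.Subset.antisymm
    · intro u hu
      obtain ⟨s, hsS, hus⟩ := hu
      exact (hSsub hsS).2 hus
    · intro u hu
      rw [Set.sUnion_eq_biUnion]
      exact hScover hu
  exact Set.Countable.mono this ((Set.countable_setOf_finite_subset hBc).image _)

end CountClopen

set_option maxHeartbeats 1000000 in
/-- Proposition 3.4: for any Hausdorff Baire group topology `τ` on the full group and any
point `x ∈ X`, the set of elements fixing `x` is `τ`-clopen. -/
theorem point_stabilizer_clopen {X : Type*} [TopologicalSpace X] [Nonempty X] [CompactSpace X]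
    [TopologicalSpace.MetrizableSpace X] [TotallyDisconnectedSpace X] [PerfectSpace X]
    (Γ : Type*) [Group Γ] [Countable Γ] [MulAction Γ X] [ContinuousConstSMul Γ X]
    (hact : ∀ U : Set X, IsOpen U → U.Nonempty →
      ∃ x ∈ U, ∃ y ∈ U, x ≠ y ∧ ∃ γ : Γ, γ • x = y)
    (τ : TopologicalSpace ↥(fullGroup Γ X))
    (hgrp : @IsTopologicalGroup ↥(fullGroup Γ X) τ _)
    (hT2 : @T2Space ↥(fullGroup Γ X) τ)
    (hBaire : @BaireSpace ↥(fullGroup Γ X) τ)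
    (x : X) :
    @IsClosed ↥(fullGroup Γ X) τ {g : ↥(fullGroup Γ X) | (g : X ≃ₜ X) x = x} ∧
      @IsOpen ↥(fullGroup Γ X) τ {g : ↥(fullGroup Γ X) | (g : X ≃ₜ X) x = x} := by
  letI := τ
  haveI := hgrp
  haveI := hT2
  haveI := hBaire
  haveI : Nonempty ↥(fullGroup Γ X) := ⟨1⟩
  -- coe lemmas
  have coe_mul : ∀ f g : ↥(fullGroup Γ X), ((f * g : ↥(fullGroup Γ X)) : X ≃ₜ X) = (f : X ≃ₜ X) * (g : X ≃ₜ X) :=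
    fun f g => rfl
  have coe_inv : ∀ f : ↥(fullGroup Γ X), ((f⁻¹ : ↥(fullGroup Γ X)) : X ≃ₜ X) = (f : X ≃ₜ X)⁻¹ := fun f => rfl
  have coe_one : ((1 : ↥(fullGroup Γ X)) : X ≃ₜ X) = 1 := rfl
  have inv_apply : ∀ (f : X ≃ₜ X) (z : X), f⁻¹ (f z) = z := fun f z => f.symm_apply_apply z
  have apply_inv : ∀ (f : X ≃ₜ X) (z : X), f (f⁻¹ z) = z := fun f z => f.apply_symm_apply z
  -- the setwise stabilizer of a set U
  have stab_subgroup : ∀ U : Set X, ∃ S : Subgroup ↥(fullGroup Γ X),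
      (S : Set ↥(fullGroup Γ X)) = {f : ↥(fullGroup Γ X) | (f : X ≃ₜ X) '' U = U} := by
    intro U
    refine ⟨⟨⟨⟨{f : ↥(fullGroup Γ X) | (f : X ≃ₜ X) '' U = U}, ?_⟩, ?_⟩, ?_⟩, rfl⟩
    · -- mul_mem
      intro a b ha hb
      show ((a * b : ↥(fullGroup Γ X)) : X ≃ₜ X) '' U = U
      rw [coe_mul]
      have : ((a : X ≃ₜ X) * (b : X ≃ₜ X)) '' U
          = (a : X ≃ₜ X) '' ((b : X ≃ₜ X) '' U) := by
        rw [← Set.image_comp]; rfl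
      rw [this, hb, ha]
    · -- one_mem
      show ((1 : ↥(fullGroup Γ X)) : X ≃ₜ X) '' U = U
      rw [coe_one]
      exact Set.image_id U
    · -- inv_mem
      intro a ha
      show ((a⁻¹ : ↥(fullGroup Γ X)) : X ≃ₜ X) '' U = U
      rw [coe_inv]
      have ha' : (a : X ≃ₜ X) '' U = U := ha
      conv_lhs => rw [← ha']
      ext z
      constructor
      · rintro ⟨_, ⟨u, hu, rfl⟩, rfl⟩
        rw [inv_apply]; exact hu
      · intro hz
        exact ⟨(a : X ≃ₜ X) z, ⟨z, hz, rfl⟩, inv_apply _ _⟩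
    done
  -- helper images
  have img_invimg : ∀ (f : X ≃ₜ X) (s : Set X), f '' ((f⁻¹ : X ≃ₜ X) '' s) = s := by
    intro f s
    rw [← Set.image_comp]
    have hfi : ⇑f ∘ ⇑f⁻¹ = id := by
      funext z
      exact apply_inv f z
    rw [hfi, Set.image_id]
  have invimg_img : ∀ (f : X ≃ₜ X) (s : Set X), (f⁻¹ : X ≃ₜ X) '' (f '' s) = s := by
    intro f s
    have := img_invimg f⁻¹ s
    rwa [inv_inv] at this
  have comp_img : ∀ (a b : X ≃ₜ X) (s : Set X), (a * b) '' s = a '' (b '' s) := by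
    intro a b s
    rw [← Set.image_comp]
    rfl
  have htrans : ∀ (U : Set X) (f g : ↥(fullGroup Γ X)), ((f⁻¹ * g : ↥(fullGroup Γ X)) : X ≃ₜ X) '' U = U ↔
      (g : X ≃ₜ X) '' U = (f : X ≃ₜ X) '' U := by
    intro U f g
    rw [coe_mul, coe_inv, comp_img]
    constructor
    · intro h
      have := congrArg (fun s => (f : X ≃ₜ X) '' s) h
      exact (img_invimg _ _).symm.trans this
    · intro h
      rw [h, invimg_img]
  -- closedness of the setwise stabilizer of a clopen set
  have stab_closed : ∀ U : Set X, IsClopen U →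
      IsClosed {f : ↥(fullGroup Γ X) | (f : X ≃ₜ X) '' U = U} := by
    intro U hU
    have hset : {f : ↥(fullGroup Γ X) | (f : X ≃ₜ X) '' U = U} =
        ⋂ (h : ↥(fullGroup Γ X)), ⋂ (_ : ∀ z, z ∉ U → (h : X ≃ₜ X) z = z),
          ⋂ (k : ↥(fullGroup Γ X)), ⋂ (_ : ∀ z, z ∈ U → (k : X ≃ₜ X) z = z),
            ({f : ↥(fullGroup Γ X) | f * h * f⁻¹ * k = k * (f * h * f⁻¹)} ∩
              {f : ↥(fullGroup Γ X) | f⁻¹ * h * f * k = k * (f⁻¹ * h * f)}) := by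
      apply Set.Subset.antisymm
      · -- forward inclusion
        intro f hf
        have hf' : (f : X ≃ₜ X) '' U = U := hf
        have hfinv : ((f : X ≃ₜ X)⁻¹ : X ≃ₜ X) '' U = U := by
          conv_lhs => rw [← hf']
          rw [invimg_img]
        have hmoveout : ∀ z, z ∉ U → (f : X ≃ₜ X)⁻¹ z ∉ U := by
          intro z hz hmem
          apply hz
          have : (f : X ≃ₜ X) ((f : X ≃ₜ X)⁻¹ z) ∈ (f : X ≃ₜ X) '' U :=
            ⟨_, hmem, rfl⟩
          rwa [apply_inv, hf'] at this
        have hmoveout' : ∀ z, z ∉ U → (f : X ≃ₜ X) z ∉ U := by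
          intro z hz hmem
          apply hz
          have : (f : X ≃ₜ X)⁻¹ ((f : X ≃ₜ X) z) ∈ ((f : X ≃ₜ X)⁻¹ : X ≃ₜ X) '' U :=
            ⟨_, hmem, rfl⟩
          rwa [inv_apply, hfinv] at this
        simp only [Set.mem_iInter]
        intro h hh k hk
        constructor
        · show f * h * f⁻¹ * k = k * (f * h * f⁻¹)
          apply Subtype.ext
          have hsupp : ∀ z, z ∉ U → ((f * h * f⁻¹ : ↥(fullGroup Γ X)) : X ≃ₜ X) z = z := by
            intro z hz
            show (f : X ≃ₜ X) ((h : X ≃ₜ X) (((f : X ≃ₜ X))⁻¹ z)) = z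
            rw [hh _ (hmoveout z hz), apply_inv]
          exact commute_of_disjoint_supp _ _ U hsupp hk
        · show f⁻¹ * h * f * k = k * (f⁻¹ * h * f)
          apply Subtype.ext
          have hsupp : ∀ z, z ∉ U → ((f⁻¹ * h * f : ↥(fullGroup Γ X)) : X ≃ₜ X) z = z := by
            intro z hz
            show ((f : X ≃ₜ X))⁻¹ ((h : X ≃ₜ X) ((f : X ≃ₜ X) z)) = z
            rw [hh _ (hmoveout' z hz), inv_apply]
          exact commute_of_disjoint_supp _ _ U hsupp hk
      · -- backward inclusion
        intro f hf
        simp only [Set.mem_iInter] at hf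
        have step : ∀ g : ↥(fullGroup Γ X),
            (∀ h : ↥(fullGroup Γ X), (∀ z, z ∉ U → (h : X ≃ₜ X) z = z) →
              ∀ z, z ∉ U →
                (g : X ≃ₜ X) ((h : X ≃ₜ X) (((g : X ≃ₜ X))⁻¹ z)) = z) →
            ∀ p, p ∈ U → (g : X ≃ₜ X) p ∈ U := by
          intro g hg p hp
          by_contra hgp
          have hBopen : IsOpen (U ∩ (g : X ≃ₜ X) ⁻¹' Uᶜ) :=
            hU.2.inter ((hU.1.isOpen_compl).preimage (g : X ≃ₜ X).continuous)
          obtain ⟨h₀, ⟨w, hwB, hh₀w⟩, hh₀supp⟩ :=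
            exists_mover hact hBopen ⟨p, ⟨hp, hgp⟩⟩
          have h₀supp : ∀ z, z ∉ U → (h₀ : X ≃ₜ X) z = z := fun z hz =>
            hh₀supp z (fun hB => hz hB.1)
          have hgw : (g : X ≃ₜ X) w ∉ U := hwB.2
          have hval := hg h₀ h₀supp ((g : X ≃ₜ X) w) hgw
          rw [inv_apply] at hval
          exact hh₀w ((g : X ≃ₜ X).injective hval)
        have h1 : ∀ p, p ∈ U → (f : X ≃ₜ X) p ∈ U := by
          apply step f
          intro h hh z hz
          have hcomm : ∀ k : ↥(fullGroup Γ X),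
              (∀ z', z' ∉ Uᶜ → (k : X ≃ₜ X) z' = z') →
              ((f * h * f⁻¹ : ↥(fullGroup Γ X)) : X ≃ₜ X) * (k : X ≃ₜ X)
                = (k : X ≃ₜ X) * ((f * h * f⁻¹ : ↥(fullGroup Γ X)) : X ≃ₜ X) := by
            intro k hk
            have hk' : ∀ z', z' ∈ U → (k : X ≃ₜ X) z' = z' := fun z' hz' =>
              hk z' (fun hc => hc hz')
            have := (hf h hh k hk').1
            have hco := congrArg (fun (u : ↥(fullGroup Γ X)) => (u : X ≃ₜ X)) this
            simpa [coe_mul] using hco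
          have hfix := fixed_of_commute hact hU.1.isOpen_compl
            ((f * h * f⁻¹ : ↥(fullGroup Γ X)) : X ≃ₜ X) hcomm hz
          exact hfix
        have h2 : ∀ p, p ∈ U → ((f : X ≃ₜ X))⁻¹ p ∈ U := by
          have hstep := step f⁻¹
          rw [coe_inv, inv_inv] at hstep
          apply hstep
          intro h hh z hz
          have hcomm : ∀ k : ↥(fullGroup Γ X),
              (∀ z', z' ∉ Uᶜ → (k : X ≃ₜ X) z' = z') →
              ((f⁻¹ * h * f : ↥(fullGroup Γ X)) : X ≃ₜ X) * (k : X ≃ₜ X)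
                = (k : X ≃ₜ X) * ((f⁻¹ * h * f : ↥(fullGroup Γ X)) : X ≃ₜ X) := by
            intro k hk
            have hk' : ∀ z', z' ∈ U → (k : X ≃ₜ X) z' = z' := fun z' hz' =>
              hk z' (fun hc => hc hz')
            have := (hf h hh k hk').2
            have hco := congrArg (fun (u : ↥(fullGroup Γ X)) => (u : X ≃ₜ X)) this
            simpa [coe_mul] using hco
          have hfix := fixed_of_commute hact hU.1.isOpen_compl
            ((f⁻¹ * h * f : ↥(fullGroup Γ X)) : X ≃ₜ X) hcomm hz
          exact hfix
        show (f : X ≃ₜ X) '' U = U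
        apply Set.Subset.antisymm
        · rintro _ ⟨p, hp, rfl⟩
          exact h1 p hp
        · intro p hp
          exact ⟨((f : X ≃ₜ X))⁻¹ p, h2 p hp, apply_inv _ _⟩
    rw [hset]
    apply isClosed_iInter; intro h
    apply isClosed_iInter; intro _
    apply isClosed_iInter; intro k
    apply isClosed_iInter; intro _
    apply IsClosed.inter
    · exact isClosed_eq
        (((continuous_id.mul continuous_const).mul continuous_inv).mul continuous_const)
        (continuous_const.mul ((continuous_id.mul continuous_const).mul continuous_inv))
    · exact isClosed_eq
        (((continuous_inv.mul continuous_const).mul continuous_id).mul continuous_const)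
        (continuous_const.mul ((continuous_inv.mul continuous_const).mul continuous_id))
  -- openness of the setwise stabilizer of a clopen set, by Baire
  have stab_open : ∀ U : Set X, IsClopen U →
      IsOpen {f : ↥(fullGroup Γ X) | (f : X ≃ₜ X) '' U = U} := by
    intro U hU
    have hcc : {V : Set X | IsClopen V}.Countable := countable_clopens X
    haveI := hcc.to_subtype
    set E : {V : Set X | IsClopen V} → Set ↥(fullGroup Γ X) :=
      fun V => {f : ↥(fullGroup Γ X) | (f : X ≃ₜ X) '' U = V.1} with hEdef
    have hpreim : ∀ (f₀ g : ↥(fullGroup Γ X)), (f₀⁻¹ * g) ∈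
        {f : ↥(fullGroup Γ X) | (f : X ≃ₜ X) '' U = U} ↔
        (g : X ≃ₜ X) '' U = (f₀ : X ≃ₜ X) '' U := htrans U
    have hEclosed : ∀ V, IsClosed (E V) := by
      intro V
      rcases Set.eq_empty_or_nonempty (E V) with he | ⟨f₀, hf₀⟩
      · rw [he]; exact isClosed_empty
      · have hEeq : E V = (fun g : ↥(fullGroup Γ X) => f₀⁻¹ * g) ⁻¹'
            {f : ↥(fullGroup Γ X) | (f : X ≃ₜ X) '' U = U} := by
          ext g
          have hf₀' : (f₀ : X ≃ₜ X) '' U = V.1 := hf₀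
          show (g : X ≃ₜ X) '' U = V.1 ↔ _
          rw [Set.mem_preimage, hpreim f₀ g, hf₀']
        rw [hEeq]
        exact (stab_closed U hU).preimage (continuous_const.mul continuous_id)
    have hEcover : ⋃ V, E V = Set.univ := by
      apply Set.eq_univ_of_forall
      intro f
      have himg : (f : X ≃ₜ X) '' U = ((f : X ≃ₜ X).symm) ⁻¹' U :=
        (congrFun (f : X ≃ₜ X).preimage_symm U).symm
      have himcl : IsClopen ((f : X ≃ₜ X) '' U) := by
        rw [himg]
        exact hU.preimage (f : X ≃ₜ X).symm.continuous
      exact Set.mem_iUnion.mpr ⟨⟨_, himcl⟩, rfl⟩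
    obtain ⟨V, u, hu⟩ := nonempty_interior_of_iUnion_of_closed hEclosed hEcover
    have huE : u ∈ E V := interior_subset hu
    have hueq : (u : X ≃ₜ X) '' U = V.1 := huE
    have hEeq : E V = (Homeomorph.mulLeft (u⁻¹ : ↥(fullGroup Γ X))) ⁻¹'
        {f : ↥(fullGroup Γ X) | (f : X ≃ₜ X) '' U = U} := by
      ext g
      show (g : X ≃ₜ X) '' U = V.1 ↔ _
      have : (Homeomorph.mulLeft (u⁻¹ : ↥(fullGroup Γ X))) g = u⁻¹ * g := rfl
      rw [Set.mem_preimage, this, hpreim u g, hueq]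
    rw [hEeq] at hu
    rw [← Homeomorph.preimage_interior] at hu
    obtain ⟨S, hS⟩ := stab_subgroup U
    rw [← hS]
    apply Subgroup.isOpen_of_mem_nhds S
      (g := (Homeomorph.mulLeft (u⁻¹ : ↥(fullGroup Γ X))) u)
    rw [hS]
    exact mem_interior_iff_mem_nhds.mp hu
  -- Part 1 : the stabilizer is closed
  have hclosed : IsClosed {g : ↥(fullGroup Γ X) | (g : X ≃ₜ X) x = x} := by
    rw [← isOpen_compl_iff]
    rw [isOpen_iff_forall_mem_open]
    intro f hf
    have hfx : (f : X ≃ₜ X) x ≠ x := hf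
    obtain ⟨O, O', hO, hO', hfxO, hxO', hOO'⟩ := t2_separation hfx
    have hNopen : IsOpen (O' ∩ (f : X ≃ₜ X) ⁻¹' O) :=
      hO'.inter (hO.preimage (f : X ≃ₜ X).continuous)
    have hxN : x ∈ O' ∩ (f : X ≃ₜ X) ⁻¹' O := ⟨hxO', hfxO⟩
    obtain ⟨U, hU, hxU, hUN⟩ := compact_exists_isClopen_in_isOpen hNopen hxN
    refine ⟨(fun g : ↥(fullGroup Γ X) => f⁻¹ * g) ⁻¹'
      {h : ↥(fullGroup Γ X) | (h : X ≃ₜ X) '' U = U}, ?_, ?_, ?_⟩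
    · intro g hg
      have hg' : ((f⁻¹ * g : ↥(fullGroup Γ X)) : X ≃ₜ X) '' U = U := hg
      rw [htrans U f g] at hg'
      have hg := hg'
      intro hgx
      have h1 : x ∈ (g : X ≃ₜ X) '' U := ⟨x, hxU, hgx⟩
      rw [hg] at h1
      obtain ⟨w, hwU, hwx⟩ := h1
      have : (f : X ≃ₜ X) w ∈ O := (hUN hwU).2
      rw [hwx] at this
      exact Set.disjoint_iff.mp hOO' ⟨this, (hUN hxU).1⟩ 
    · exact (stab_open U hU).preimage (continuous_const.mul continuous_id)
    · show ((f⁻¹ * f : ↥(fullGroup Γ X)) : X ≃ₜ X) '' U = U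
      rw [inv_mul_cancel, coe_one]
      exact Set.image_id U
  -- Part 2 : the stabilizer is open, by Baire
  have hopen : IsOpen {g : ↥(fullGroup Γ X) | (g : X ≃ₜ X) x = x} := by
    set E : Γ → Set ↥(fullGroup Γ X) :=
      fun γ => {g : ↥(fullGroup Γ X) | (g : X ≃ₜ X) x = γ • x} with hEdef
    have hpt : ∀ (f₀ g : ↥(fullGroup Γ X)),
        ((f₀⁻¹ * g : ↥(fullGroup Γ X)) : X ≃ₜ X) x = x ↔
        (g : X ≃ₜ X) x = (f₀ : X ≃ₜ X) x := by
      intro f₀ g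
      show ((f₀ : X ≃ₜ X))⁻¹ ((g : X ≃ₜ X) x) = x ↔ _
      constructor
      · intro h
        have := congrArg (f₀ : X ≃ₜ X) h
        rwa [apply_inv] at this
      · intro h
        rw [h, inv_apply]
    have hEclosed : ∀ γ, IsClosed (E γ) := by
      intro γ
      rcases Set.eq_empty_or_nonempty (E γ) with he | ⟨f₀, hf₀⟩
      · rw [he]; exact isClosed_empty
      · have hf₀' : (f₀ : X ≃ₜ X) x = γ • x := hf₀
        have hEeq : E γ = (fun g : ↥(fullGroup Γ X) => f₀⁻¹ * g) ⁻¹'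
            {g : ↥(fullGroup Γ X) | (g : X ≃ₜ X) x = x} := by
          ext g
          show (g : X ≃ₜ X) x = γ • x ↔ _
          rw [Set.mem_preimage]
          show _ ↔ ((f₀⁻¹ * g : ↥(fullGroup Γ X)) : X ≃ₜ X) x = x
          rw [hpt f₀ g, hf₀']
        rw [hEeq]
        exact hclosed.preimage (continuous_const.mul continuous_id)
    have hEcover : ⋃ γ, E γ = Set.univ := by
      apply Set.eq_univ_of_forall
      intro g
      obtain ⟨γ, hγ⟩ := g.2 x
      exact Set.mem_iUnion.mpr ⟨γ, hγ⟩
    obtain ⟨γ, u, hu⟩ := nonempty_interior_of_iUnion_of_closed hEclosed hEcover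
    have huE : u ∈ E γ := interior_subset hu
    have hueq : (u : X ≃ₜ X) x = γ • x := huE
    have hEeq : E γ = (Homeomorph.mulLeft (u⁻¹ : ↥(fullGroup Γ X))) ⁻¹'
        {g : ↥(fullGroup Γ X) | (g : X ≃ₜ X) x = x} := by
      ext g
      show (g : X ≃ₜ X) x = γ • x ↔ _
      rw [Set.mem_preimage]
      show _ ↔ ((u⁻¹ * g : ↥(fullGroup Γ X)) : X ≃ₜ X) x = x
      rw [hpt u g, hueq]
    rw [hEeq, ← Homeomorph.preimage_interior] at hu
    -- stabilizer subgroup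
    have stabPt : ∃ S : Subgroup ↥(fullGroup Γ X),
        (S : Set ↥(fullGroup Γ X)) = {g : ↥(fullGroup Γ X) | (g : X ≃ₜ X) x = x} := by
      refine ⟨⟨⟨⟨{g : ↥(fullGroup Γ X) | (g : X ≃ₜ X) x = x}, ?_⟩, ?_⟩, ?_⟩, rfl⟩
      · intro a b ha hb
        show ((a * b : ↥(fullGroup Γ X)) : X ≃ₜ X) x = x
        show (a : X ≃ₜ X) ((b : X ≃ₜ X) x) = x
        rw [show (b : X ≃ₜ X) x = x from hb]
        exact ha
      · show ((1 : ↥(fullGroup Γ X)) : X ≃ₜ X) x = x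
        rfl
      · intro a ha
        show ((a : X ≃ₜ X))⁻¹ x = x
        conv_lhs => rw [← show (a : X ≃ₜ X) x = x from ha]
        exact inv_apply _ _
    obtain ⟨S, hS⟩ := stabPt
    rw [← hS]
    apply Subgroup.isOpen_of_mem_nhds S
      (g := (Homeomorph.mulLeft (u⁻¹ : ↥(fullGroup Γ X))) u)
    rw [hS]
    exact mem_interior_iff_mem_nhds.mp hu
  exact ⟨hclosed, hopen⟩
end

section
/- Let Γ be a countable group acting by homeomorphisms on a Cantor space X such that for every nonempty open set U ⊆ X there exist distinct points x, y ∈ U and γ ∈ Γ with γ·x = y, and let [R] be the full group of the action. Then there is no topology τ on [R] such that ([R], τ) is a topological group, τ is Hausdorff, τ is second countable, and ([R], τ) is a Baire space. -/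
open Set

section NoBaireAux
set_option linter.unusedSectionVars false

open scoped Classical

variable {X : Type*} [TopologicalSpace X] {Γ : Type*} [Group Γ] [MulAction Γ X]
  [ContinuousConstSMul Γ X]

lemma mem_fullGroup_iff' {g : X ≃ₜ X} :
    g ∈ fullGroup Γ X ↔ ∀ x : X, ∃ γ : Γ, g x = γ • x := Iff.rfl

/-- The "partial swap": `γ` on `C`, `γ⁻¹` on `γ • C`, identity elsewhere. -/
noncomputable def locSwap (γ : Γ) (C : Set X) : X → X := fun x =>
  if x ∈ C then γ • x else if x ∈ (fun c => γ • c) '' C then γ⁻¹ • x else x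

lemma locSwap_mem (γ : Γ) {C : Set X} {x : X} (hx : x ∈ C) : locSwap γ C x = γ • x :=
  if_pos hx

lemma locSwap_img (γ : Γ) {C : Set X} (hd : ∀ x ∈ C, γ • x ∉ C) {x : X}
    (hx : x ∈ (fun c => γ • c) '' C) : locSwap γ C x = γ⁻¹ • x := by
  obtain ⟨c, hc, rfl⟩ := hx
  have : γ • c ∉ C := hd c hc
  simp only [locSwap, if_neg this]
  exact if_pos ⟨c, hc, rfl⟩

lemma locSwap_off (γ : Γ) {C : Set X} {x : X} (h1 : x ∉ C)
    (h2 : x ∉ (fun c => γ • c) '' C) : locSwap γ C x = x := by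
  simp only [locSwap, if_neg h1, if_neg h2]

lemma locSwap_invol (γ : Γ) {C : Set X} (hd : ∀ x ∈ C, γ • x ∉ C) (x : X) :
    locSwap γ C (locSwap γ C x) = x := by
  by_cases hx : x ∈ C
  · rw [locSwap_mem γ hx, locSwap_img γ hd ⟨x, hx, rfl⟩, inv_smul_smul]
  · by_cases hx2 : x ∈ (fun c => γ • c) '' C
    · obtain ⟨c, hc, rfl⟩ := hx2
      rw [locSwap_img γ hd ⟨c, hc, rfl⟩, inv_smul_smul, locSwap_mem γ hc]
    · rw [locSwap_off γ hx hx2, locSwap_off γ hx hx2]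

lemma locSwap_continuous (γ : Γ) {C : Set X} (hC : IsClopen C) :
    Continuous (locSwap γ C) := by
  have himg : IsClopen ((fun c => γ • c) '' C) := by
    have h1 : (fun c => γ • c) '' C = (Homeomorph.smul γ (α := X)).symm ⁻¹' C :=
      (Homeomorph.smul γ (α := X)).toEquiv.image_eq_preimage_symm C
    rw [h1]
    exact hC.preimage (Homeomorph.smul γ (α := X)).symm.continuous
  unfold locSwap
  apply Continuous.if
  · intro a ha
    have : frontier {x : X | x ∈ C} = (∅ : Set X) := hC.frontier_eq
    rw [this] at ha
    exact absurd ha (notMem_empty a)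
  · exact continuous_const_smul γ
  · apply Continuous.if
    · intro a ha
      have : frontier {x : X | x ∈ (fun c => γ • c) '' C} = (∅ : Set X) := himg.frontier_eq
      rw [this] at ha
      exact absurd ha (notMem_empty a)
    · exact continuous_const_smul γ⁻¹
    · exact continuous_id

/-- The partial swap as a homeomorphism. -/
noncomputable def locSwapHomeo (γ : Γ) (C : Set X) (hC : IsClopen C)
    (hd : ∀ x ∈ C, γ • x ∉ C) : X ≃ₜ X where
  toFun := locSwap γ C
  invFun := locSwap γ C
  left_inv := locSwap_invol γ hd
  right_inv := locSwap_invol γ hd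
  continuous_toFun := locSwap_continuous γ hC
  continuous_invFun := locSwap_continuous γ hC

@[simp] lemma locSwapHomeo_apply (γ : Γ) (C : Set X) (hC : IsClopen C)
    (hd : ∀ x ∈ C, γ • x ∉ C) (x : X) : locSwapHomeo γ C hC hd x = locSwap γ C x := rfl

lemma locSwapHomeo_mem (γ : Γ) (C : Set X) (hC : IsClopen C)
    (hd : ∀ x ∈ C, γ • x ∉ C) : locSwapHomeo γ C hC hd ∈ fullGroup Γ X := by
  intro x
  by_cases hx : x ∈ C
  · exact ⟨γ, locSwap_mem γ hx⟩
  · by_cases hx2 : x ∈ (fun c => γ • c) '' C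
    · exact ⟨γ⁻¹, locSwap_img γ hd hx2⟩
    · exact ⟨1, by rw [locSwapHomeo_apply, locSwap_off γ hx hx2, one_smul]⟩

/-- From the richness hypothesis, inside every nonempty open set there is a
nonempty clopen set `C` which some `γ` moves off itself while staying in the set. -/
lemma exists_localSwap [T2Space X] [CompactSpace X] [TotallyDisconnectedSpace X]
    (hact : ∀ U : Set X, IsOpen U → U.Nonempty → ∃ x ∈ U, ∃ y ∈ U, x ≠ y ∧ ∃ γ : Γ, γ • x = y)
    {N : Set X} (hN : IsOpen N) (hNne : N.Nonempty) :
    ∃ (C : Set X) (γ : Γ), IsClopen C ∧ C.Nonempty ∧ C ⊆ N ∧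
      (∀ x ∈ C, γ • x ∈ N) ∧ (∀ x ∈ C, γ • x ∉ C) := by
  obtain ⟨x, hxN, y, hyN, hxy, γ, hγ⟩ := hact N hN hNne
  obtain ⟨O₁, O₂, hO₁, hO₂, hxO, hyO, hdisj⟩ := t2_separation hxy
  have hcont : Continuous (fun z : X => γ • z) := continuous_const_smul γ
  have hVopen : IsOpen ((N ∩ O₁) ∩ (fun z => γ • z) ⁻¹' (N ∩ O₂)) :=
    ((hN.inter hO₁).inter (((hN.inter hO₂)).preimage hcont))
  have hxV : x ∈ (N ∩ O₁) ∩ (fun z => γ • z) ⁻¹' (N ∩ O₂) := by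
    refine ⟨⟨hxN, hxO⟩, ?_⟩
    simp only [mem_preimage, hγ]
    exact ⟨hyN, hyO⟩
  obtain ⟨C, hC, hxC, hCV⟩ := compact_exists_isClopen_in_isOpen hVopen hxV
  refine ⟨C, γ, hC, ⟨x, hxC⟩, fun c hc => (hCV hc).1.1, fun c hc => ((hCV hc).2).1, ?_⟩
  intro c hc hcC
  have h1 : γ • c ∈ O₂ := ((hCV hc).2).2
  have h2 : γ • c ∈ O₁ := ((hCV hcC).1).2
  exact (Set.disjoint_left.mp hdisj h2) h1

end NoBaireAux

section Fixator

set_option linter.unusedSectionVars false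

variable {X : Type*} [TopologicalSpace X] {Γ : Type*} [Group Γ] [MulAction Γ X]
  [ContinuousConstSMul Γ X]

/-- The pointwise fixator of an open set `B` in the full group is exactly the set of
elements commuting with everything supported in `B`. -/
lemma fix_eq_commuting [T2Space X] [CompactSpace X] [TotallyDisconnectedSpace X]
    (hact : ∀ U : Set X, IsOpen U → U.Nonempty → ∃ x ∈ U, ∃ y ∈ U, x ≠ y ∧ ∃ γ : Γ, γ • x = y)
    {B : Set X} (hB : IsOpen B) :
    {g : ↥(fullGroup Γ X) | ∀ x ∈ B, (g : X ≃ₜ X) x = x} =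
      ⋂ h ∈ {h : ↥(fullGroup Γ X) | ∀ x ∉ B, (h : X ≃ₜ X) x = x},
        {g : ↥(fullGroup Γ X) | g * h = h * g} := by
  ext g
  simp only [mem_setOf_eq, mem_iInter]
  constructor
  · intro hg h hh
    -- `h` maps `B` into `B`, `g` maps `Bᶜ` into `Bᶜ`
    have hhB : ∀ x ∈ B, (h : X ≃ₜ X) x ∈ B := by
      intro x hx
      by_contra hout
      have h1 : (h : X ≃ₜ X) ((h : X ≃ₜ X) x) = (h : X ≃ₜ X) x := hh _ hout
      have h2 : (h : X ≃ₜ X) x = x := (h : X ≃ₜ X).injective h1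
      rw [h2] at hout
      exact hout hx
    have hgBc : ∀ x, x ∉ B → (g : X ≃ₜ X) x ∉ B := by
      intro x hx hin
      have h1 : (g : X ≃ₜ X) ((g : X ≃ₜ X) x) = (g : X ≃ₜ X) x := hg _ hin
      have h2 : (g : X ≃ₜ X) x = x := (g : X ≃ₜ X).injective h1
      rw [h2] at hin
      exact hx hin
    have key : ∀ x : X, (g : X ≃ₜ X) ((h : X ≃ₜ X) x) = (h : X ≃ₜ X) ((g : X ≃ₜ X) x) := by
      intro x
      by_cases hx : x ∈ B
      · rw [hg x hx, hg _ (hhB x hx)]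
      · rw [hh x hx, hh _ (hgBc x hx)]
    have : ((g * h : ↥(fullGroup Γ X)) : X ≃ₜ X) = ((h * g : ↥(fullGroup Γ X)) : X ≃ₜ X) := by
      ext x
      simp only [Subgroup.coe_mul, Homeomorph.mul_apply']
      exact key x
    exact Subtype.ext this
  · intro hcomm x₀ hx₀
    by_contra hgx
    obtain ⟨O₁, O₂, hO₁, hO₂, hxO, hgxO, hdisj⟩ := t2_separation (Ne.symm hgx)
    set N := (B ∩ O₁) ∩ (g : X ≃ₜ X) ⁻¹' O₂ with hNdef
    have hNopen : IsOpen N := (hB.inter hO₁).inter (hO₂.preimage (g : X ≃ₜ X).continuous)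
    have hx₀N : x₀ ∈ N := ⟨⟨hx₀, hxO⟩, hgxO⟩
    obtain ⟨C, γ, hC, hCne, hCN, hγN, hγC⟩ :=
      exists_localSwap hact hNopen ⟨x₀, hx₀N⟩
    set h : ↥(fullGroup Γ X) :=
      ⟨locSwapHomeo γ C hC hγC, locSwapHomeo_mem γ C hC hγC⟩ with hhdef
    have himgN : ∀ z ∈ (fun c => γ • c) '' C, z ∈ N := by
      rintro z ⟨c, hc, rfl⟩
      exact hγN c hc
    have hhmem : ∀ x ∉ B, (h : X ≃ₜ X) x = x := by
      intro x hx
      have h1 : x ∉ C := fun hxC => hx (hCN hxC).1.1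
      have h2 : x ∉ (fun c => γ • c) '' C := fun hxI => hx (himgN x hxI).1.1
      exact locSwap_off γ h1 h2
    obtain ⟨u, hu⟩ := hCne
    have heq := hcomm h hhmem
    have heval : (g : X ≃ₜ X) ((h : X ≃ₜ X) u) = (h : X ≃ₜ X) ((g : X ≃ₜ X) u) := by
      have := congrArg (fun k : ↥(fullGroup Γ X) => ((k : X ≃ₜ X) u)) heq
      simpa only [Subgroup.coe_mul, Homeomorph.mul_apply'] using this
    -- compute both sides
    have hhu : (h : X ≃ₜ X) u = γ • u := locSwap_mem γ hu
    have hguO₂ : (g : X ≃ₜ X) u ∈ O₂ := (hCN hu).2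
    have hguC : (g : X ≃ₜ X) u ∉ C := fun hmem =>
      (Set.disjoint_left.mp hdisj (hCN hmem).1.2) hguO₂
    have hguI : (g : X ≃ₜ X) u ∉ (fun c => γ • c) '' C := fun hmem =>
      (Set.disjoint_left.mp hdisj (himgN _ hmem).1.2) hguO₂
    have hhgu : (h : X ≃ₜ X) ((g : X ≃ₜ X) u) = (g : X ≃ₜ X) u := locSwap_off γ hguC hguI
    rw [hhu, hhgu] at heval
    have hne : γ • u ≠ u := fun habs => (hγC u hu) (by rw [habs]; exact hu)
    exact hne ((g : X ≃ₜ X).injective heval)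

end Fixator

section Family
open Topology Filter

set_option linter.unusedSectionVars false

open scoped Classical

variable {X : Type*} [MetricSpace X] {Γ : Type*} [Group Γ] [MulAction Γ X]
  [ContinuousConstSMul Γ X]

lemma shrink_step [CompactSpace X] [TotallyDisconnectedSpace X] [PerfectSpace X]
    (ε : ℝ) (hε : 0 < ε) (R : Set X) (hR : IsClopen R) (hne : R.Nonempty) :
    ∃ q : Set X × Set X,
      (IsClopen q.1 ∧ q.1.Nonempty ∧ q.1 ⊆ R ∧ (∀ y ∈ q.1, ∀ z ∈ q.1, dist y z ≤ ε)) ∧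
      (IsClopen q.2 ∧ q.2.Nonempty ∧ q.2 ⊆ R ∧ q.1 ∩ q.2 = ∅) := by
  obtain ⟨x, hx⟩ := hne
  have hRx : R ∈ 𝓝 x := hR.isOpen.mem_nhds hx
  have hinter : (R ∩ {x}ᶜ).Nonempty := by
    have hne' : R ∩ {x}ᶜ ∈ 𝓝[≠] x :=
      Filter.inter_mem (mem_nhdsWithin_of_mem_nhds hRx) self_mem_nhdsWithin
    exact Filter.nonempty_of_mem hne'
  obtain ⟨y, hyR, hyx⟩ := hinter
  have hyx' : y ≠ x := hyx
  have hdpos : (0:ℝ) < dist y x := dist_pos.2 hyx'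
  set r := min (ε/2) (dist y x / 2) with hrdef
  have hr : 0 < r := lt_min (by linarith) (by linarith)
  obtain ⟨D, hD, hxD, hDsub⟩ := compact_exists_isClopen_in_isOpen
    (hR.isOpen.inter Metric.isOpen_ball) ⟨hx, Metric.mem_ball_self hr⟩
  have hyD : y ∉ D := by
    intro hyD
    have h1 : y ∈ Metric.ball x r := (hDsub hyD).2
    rw [Metric.mem_ball] at h1
    have h2 : dist y x < dist y x / 2 := lt_of_lt_of_le h1 (min_le_right _ _)
    linarith
  obtain ⟨R', hR', hyR', hR'sub⟩ := compact_exists_isClopen_in_isOpen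
    (hR.isOpen.inter hD.isClosed.isOpen_compl) ⟨hyR, hyD⟩
  refine ⟨(D, R'), ⟨hD, ⟨x, hxD⟩, fun z hz => (hDsub hz).1, ?_⟩,
    hR', ⟨y, hyR'⟩, fun z hz => (hR'sub hz).1, ?_⟩
  · intro a ha b hb
    have h1 : dist a x < r := by
      have := (hDsub ha).2; rwa [Metric.mem_ball] at this
    have h2 : dist b x < r := by
      have := (hDsub hb).2; rwa [Metric.mem_ball] at this
    have hrε : r ≤ ε/2 := min_le_left _ _
    calc dist a b ≤ dist a x + dist x b := dist_triangle a x b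
    _ = dist a x + dist b x := by rw [dist_comm x b]
    _ ≤ ε/2 + ε/2 := by linarith
    _ = ε := by ring
  · ext z
    simp only [mem_inter_iff, mem_empty_iff_false, iff_false, not_and]
    intro hzD hzR'
    exact (hR'sub hzR').2 hzD

lemma exists_swap_family [CompactSpace X] [TotallyDisconnectedSpace X] [PerfectSpace X]
    (hact : ∀ U : Set X, IsOpen U → U.Nonempty → ∃ x ∈ U, ∃ y ∈ U, x ≠ y ∧ ∃ γ : Γ, γ • x = y)
    {B : Set X} (hB : IsOpen B) (hBne : B.Nonempty) :
    ∃ (D : ℕ → Set X) (f : ℕ → X ≃ₜ X),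
      (∀ k, IsClopen (D k)) ∧ (∀ k, D k ⊆ B) ∧
      (∀ k j, k ≠ j → D k ∩ D j = ∅) ∧
      (∀ k, ∀ y ∈ D k, ∀ z ∈ D k, dist y z ≤ (1/2 : ℝ)^k) ∧
      (∀ k, f k ∈ fullGroup Γ X) ∧
      (∀ k, ∀ x ∈ D k, f k x ∈ D k) ∧
      (∀ k, ∀ x, x ∉ D k → f k x = x) ∧
      (∀ k, ∀ x, f k (f k x) = x) ∧
      (∀ k, ∃ u ∈ D k, f k u ≠ u) := by
  have hhalf : ∀ k : ℕ, (0:ℝ) < (1/2)^k := fun k => pow_pos (by norm_num) k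
  choose q hq1 hq2 using fun (k : ℕ) =>
    shrink_step (X := X) ((1/2 : ℝ)^k) (hhalf k)
  obtain ⟨x₀, hx₀⟩ := hBne
  obtain ⟨R₀, hR₀, hx₀R₀, hR₀B⟩ := compact_exists_isClopen_in_isOpen hB hx₀
  let T : Type _ := {R : Set X // IsClopen R ∧ R.Nonempty}
  let next : ℕ → T → T := fun k R =>
    ⟨(q k R.1 R.2.1 R.2.2).2,
     (hq2 k R.1 R.2.1 R.2.2).1,
     (hq2 k R.1 R.2.1 R.2.2).2.1⟩
  let Reg : ℕ → T := fun n => Nat.rec ⟨R₀, hR₀, ⟨x₀, hx₀R₀⟩⟩ next n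
  have hRegsucc : ∀ k, Reg (k+1) = next k (Reg k) := fun k => rfl
  -- the chosen small piece at stage k
  let D : ℕ → Set X := fun k => (q k (Reg k).1 (Reg k).2.1 (Reg k).2.2).1
  have hDprop : ∀ k, IsClopen (D k) ∧ (D k).Nonempty ∧ D k ⊆ (Reg k).1 ∧
      (∀ y ∈ D k, ∀ z ∈ D k, dist y z ≤ (1/2 : ℝ)^k) :=
    fun k => hq1 k (Reg k).1 (Reg k).2.1 (Reg k).2.2
  have hDdisjR : ∀ k, D k ∩ (Reg (k+1)).1 = ∅ := by
    intro k
    have := (hq2 k (Reg k).1 (Reg k).2.1 (Reg k).2.2).2.2.2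
    rw [hRegsucc k]
    exact this
  have hmono : ∀ k, (Reg (k+1)).1 ⊆ (Reg k).1 := by
    intro k
    have := (hq2 k (Reg k).1 (Reg k).2.1 (Reg k).2.2).2.2.1
    rw [hRegsucc k]
    exact this
  have hchain : ∀ k j, k ≤ j → (Reg j).1 ⊆ (Reg k).1 := by
    intro k j hkj
    induction j with
    | zero => have : k = 0 := Nat.le_zero.mp hkj; rw [this]
    | succ n ih =>
      rcases Nat.lt_or_ge k (n+1) with h | h
      · exact (hmono n).trans (ih (Nat.lt_succ_iff.mp h))
      · have : k = n + 1 := le_antisymm hkj h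
        rw [this]
  have hRegB : ∀ k, (Reg k).1 ⊆ B := by
    intro k
    induction k with
    | zero => exact hR₀B
    | succ n ih => exact (hmono n).trans ih
  have hDB : ∀ k, D k ⊆ B := fun k => ((hDprop k).2.2.1).trans (hRegB k)
  have hdisj : ∀ k j, k < j → D k ∩ D j = ∅ := by
    intro k j hkj
    have h1 : D j ⊆ (Reg (k+1)).1 := ((hDprop j).2.2.1).trans (hchain (k+1) j hkj)
    rw [← Set.subset_empty_iff]
    intro z hz
    rw [← hDdisjR k]
    exact ⟨hz.1, h1 hz.2⟩
  -- build a swap inside each D k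
  choose C γc hCclopen hCne hCsub hγN hγC using
    fun k => exists_localSwap hact ((hDprop k).1.isOpen) (hDprop k).2.1
  let f : ℕ → X ≃ₜ X := fun k => locSwapHomeo (γc k) (C k) (hCclopen k) (hγC k)
  have himg : ∀ k, (fun c => γc k • c) '' (C k) ⊆ D k := by
    rintro k z ⟨c, hc, rfl⟩
    exact hγN k c hc
  have hfD : ∀ k, ∀ x ∈ D k, f k x ∈ D k := by
    intro k x hx
    by_cases h1 : x ∈ C k
    · show locSwap (γc k) (C k) x ∈ D k
      rw [locSwap_mem _ h1]
      exact hγN k x h1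
    · by_cases h2 : x ∈ (fun c => γc k • c) '' (C k)
      · show locSwap (γc k) (C k) x ∈ D k
        rw [locSwap_img _ (hγC k) h2]
        obtain ⟨c, hc, hcx⟩ := h2
        have : (γc k)⁻¹ • x = c := by rw [← hcx]; exact inv_smul_smul _ _
        rw [this]
        exact hCsub k hc
      · show locSwap (γc k) (C k) x ∈ D k
        rw [locSwap_off _ h1 h2]
        exact hx
  have hfoff : ∀ k, ∀ x, x ∉ D k → f k x = x := by
    intro k x hx
    have h1 : x ∉ C k := fun h => hx (hCsub k h)
    have h2 : x ∉ (fun c => γc k • c) '' (C k) := fun h => hx (himg k h)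
    exact locSwap_off _ h1 h2
  refine ⟨D, f, fun k => (hDprop k).1, hDB, ?_, fun k => (hDprop k).2.2.2,
    fun k => locSwapHomeo_mem _ _ _ _, hfD, hfoff,
    fun k x => locSwap_invol _ (hγC k) x, ?_⟩
  · intro k j hkj
    rcases Nat.lt_or_ge k j with h | h
    · exact hdisj k j h
    · have hjk : j < k := lt_of_le_of_ne h (Ne.symm hkj)
      rw [Set.inter_comm]
      exact hdisj j k hjk
  · intro k
    obtain ⟨u, hu⟩ := hCne k
    refine ⟨u, hCsub k hu, ?_⟩
    show locSwap (γc k) (C k) u ≠ u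
    rw [locSwap_mem _ hu]
    intro habs
    exact (hγC k u hu) (by rw [habs]; exact hu)

end Family

section BigFamily

set_option linter.unusedSectionVars false

open scoped Classical
open Topology Filter

variable {X : Type*} [MetricSpace X] {Γ : Type*} [Group Γ] [MulAction Γ X]
  [ContinuousConstSMul Γ X]

lemma exists_injective_family [CompactSpace X] [TotallyDisconnectedSpace X] [PerfectSpace X]
    (hact : ∀ U : Set X, IsOpen U → U.Nonempty → ∃ x ∈ U, ∃ y ∈ U, x ≠ y ∧ ∃ γ : Γ, γ • x = y)
    {B : Set X} (hB : IsOpen B) (hBne : B.Nonempty) :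
    ∃ g : Set ℕ → ↥(fullGroup Γ X), ∀ S S' : Set ℕ, S ≠ S' →
      ∃ x ∈ B, (((g S)⁻¹ * g S' : ↥(fullGroup Γ X)) : X ≃ₜ X) x ≠ x := by
  obtain ⟨D, f, hDclopen, hDB, hDdisj, hDsmall, hfmem, hfD, hfoff, hfinv, hfmove⟩ :=
    exists_swap_family hact hB hBne
  have huniq : ∀ {x : X} {k j : ℕ}, x ∈ D k → x ∈ D j → k = j := by
    intro x k j hk hj
    by_contra hne
    have := hDdisj k j hne
    have : x ∈ D k ∩ D j := ⟨hk, hj⟩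
    rw [hDdisj k j hne] at this
    exact this
  set F : Set ℕ → X → X := fun S x =>
    if h : ∃ k, k ∈ S ∧ x ∈ D k then f h.choose x else x with hFdef
  have hF_eq : ∀ (S : Set ℕ) (k : ℕ) (x : X), k ∈ S → x ∈ D k → F S x = f k x := by
    intro S k x hkS hxk
    have h : ∃ k, k ∈ S ∧ x ∈ D k := ⟨k, hkS, hxk⟩
    have hch := h.choose_spec
    have : h.choose = k := huniq hch.2 hxk
    simp only [hFdef, dif_pos h, this]
  have hF_off : ∀ (S : Set ℕ) (x : X), (∀ k ∈ S, x ∉ D k) → F S x = x := by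
    intro S x hx
    have h : ¬ ∃ k, k ∈ S ∧ x ∈ D k := by
      rintro ⟨k, hkS, hxk⟩; exact hx k hkS hxk
    simp only [hFdef, dif_neg h]
  have hF_elsewhere : ∀ (S : Set ℕ) (k : ℕ) (x : X), k ∉ S → x ∈ D k → F S x = x := by
    intro S k x hkS hxk
    apply hF_off
    intro j hjS hxj
    exact hkS (huniq hxj hxk ▸ hjS)
  have hF_mapsD : ∀ (S : Set ℕ) (k : ℕ) (x : X), x ∈ D k → F S x ∈ D k := by
    intro S k x hxk
    by_cases hkS : k ∈ S
    · rw [hF_eq S k x hkS hxk]; exact hfD k x hxk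
    · rw [hF_elsewhere S k x hkS hxk]; exact hxk
  have hF_inv : ∀ (S : Set ℕ) (x : X), F S (F S x) = x := by
    intro S x
    by_cases h : ∃ k, k ∈ S ∧ x ∈ D k
    · obtain ⟨k, hkS, hxk⟩ := h
      rw [hF_eq S k x hkS hxk, hF_eq S k _ hkS (hfD k x hxk), hfinv]
    · push_neg at h
      rw [hF_off S x h, hF_off S x h]
  have hF_cont : ∀ S : Set ℕ, Continuous (F S) := by
    intro S
    rw [continuous_iff_continuousAt]
    intro x
    by_cases hx : ∃ k, x ∈ D k
    · obtain ⟨k, hxk⟩ := hx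
      have hnhds : D k ∈ 𝓝 x := (hDclopen k).isOpen.mem_nhds hxk
      by_cases hkS : k ∈ S
      · have heq : ∀ y ∈ D k, F S y = f k y := fun y hy => hF_eq S k y hkS hy
        have : F S =ᶠ[𝓝 x] (f k : X → X) :=
          Filter.eventuallyEq_of_mem hnhds heq
        exact (f k).continuous.continuousAt.congr this.symm
      · have heq : ∀ y ∈ D k, F S y = y := fun y hy => hF_elsewhere S k y hkS hy
        have : F S =ᶠ[𝓝 x] (id : X → X) :=
          Filter.eventuallyEq_of_mem hnhds heq
        exact continuousAt_id.congr this.symm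
    · push_neg at hx
      have hFx : F S x = x := hF_off S x (fun k _ => hx k)
      rw [Metric.continuousAt_iff]
      intro ε hε
      obtain ⟨n, hn⟩ := exists_pow_lt_of_lt_one (half_pos hε) (by norm_num : (1/2 : ℝ) < 1)
      have hEclosed : IsClosed (⋃ k ∈ Finset.range n, D k) := by
        apply Set.Finite.isClosed_biUnion (Finset.finite_toSet _)
        intro k _
        exact (hDclopen k).isClosed
      have hxE : x ∈ (⋃ k ∈ Finset.range n, D k)ᶜ := by
        simp only [mem_compl_iff, mem_iUnion]
        rintro ⟨k, _, hk⟩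
        exact hx k hk
      obtain ⟨δ₁, hδ₁, hball⟩ := Metric.isOpen_iff.mp hEclosed.isOpen_compl x hxE
      refine ⟨min δ₁ (ε/2), lt_min hδ₁ (half_pos hε), ?_⟩
      intro y hy
      rw [hFx]
      by_cases hyD : ∃ k, k ∈ S ∧ y ∈ D k
      · obtain ⟨k, hkS, hyk⟩ := hyD
        rw [hF_eq S k y hkS hyk]
        have hyball : y ∈ Metric.ball x δ₁ :=
          Metric.mem_ball.mpr (lt_of_lt_of_le hy (min_le_left _ _))
        have hkn : n ≤ k := by
          by_contra hlt
          push_neg at hlt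
          have : y ∈ ⋃ k ∈ Finset.range n, D k := by
            simp only [mem_iUnion]
            exact ⟨k, Finset.mem_range.mpr hlt, hyk⟩
          exact (hball hyball) this
        have h1 : dist (f k y) y ≤ (1/2 : ℝ)^k :=
          hDsmall k (f k y) (hfD k y hyk) y hyk
        have h2 : ((1:ℝ)/2)^k ≤ (1/2)^n :=
          pow_le_pow_of_le_one (by norm_num) (by norm_num) hkn
        calc dist (f k y) x ≤ dist (f k y) y + dist y x := dist_triangle _ _ _
        _ ≤ (1/2)^n + dist y x := by linarith
        _ < ε/2 + ε/2 := by
            have : dist y x < ε/2 := lt_of_lt_of_le hy (min_le_right _ _)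
            linarith
        _ = ε := by ring
      · push_neg at hyD
        rw [hF_off S y hyD]
        exact lt_of_lt_of_le hy ((min_le_right _ _).trans (by linarith))
  -- package as homeomorphisms in the full group
  let gh : Set ℕ → X ≃ₜ X := fun S =>
    ⟨⟨F S, F S, hF_inv S, hF_inv S⟩, hF_cont S, hF_cont S⟩
  have ghmem : ∀ S, gh S ∈ fullGroup Γ X := by
    intro S x
    by_cases h : ∃ k, k ∈ S ∧ x ∈ D k
    · obtain ⟨k, hkS, hxk⟩ := h
      obtain ⟨γ, hγ⟩ := hfmem k x
      refine ⟨γ, ?_⟩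
      show F S x = γ • x
      rw [hF_eq S k x hkS hxk]
      exact hγ
    · push_neg at h
      refine ⟨1, ?_⟩
      show F S x = (1 : Γ) • x
      rw [hF_off S x h, one_smul]
  refine ⟨fun S => ⟨gh S, ghmem S⟩, ?_⟩
  intro S S' hSS'
  have hdiff : ∃ k, (k ∈ S' ∧ k ∉ S) ∨ (k ∈ S ∧ k ∉ S') := by
    by_contra h
    push_neg at h
    apply hSS'
    ext k
    have := h k
    exact ⟨fun hk => this.2 hk, fun hk => this.1 hk⟩
  obtain ⟨k, hk⟩ := hdiff
  obtain ⟨u, huD, humove⟩ := hfmove k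
  have hinv_apply : ∀ (S₀ : Set ℕ) (x : X),
      (((⟨gh S₀, ghmem S₀⟩ : ↥(fullGroup Γ X))⁻¹ : ↥(fullGroup Γ X)) : X ≃ₜ X) x = F S₀ x :=
    fun S₀ x => rfl
  refine ⟨u, hDB k huD, ?_⟩
  have happly : ((((⟨gh S, ghmem S⟩ : ↥(fullGroup Γ X))⁻¹ * ⟨gh S', ghmem S'⟩ :
      ↥(fullGroup Γ X))) : X ≃ₜ X) u = F S (F S' u) := rfl
  rw [happly]
  rcases hk with ⟨hkS', hkS⟩ | ⟨hkS, hkS'⟩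
  · rw [hF_eq S' k u hkS' huD, hF_elsewhere S k _ hkS (hfD k u huD)]
    exact humove
  · rw [hF_elsewhere S' k u hkS' huD, hF_eq S k u hkS huD]
    exact humove

end BigFamily

/-- Theorem: there is no second countable, Hausdorff, Baire group topology on the
full group of such an action. -/
theorem no_second_countable_hausdorff_baire_group_topology {X : Type*} [TopologicalSpace X] [Nonempty X] [CompactSpace X]
    [TopologicalSpace.MetrizableSpace X] [TotallyDisconnectedSpace X] [PerfectSpace X]
    (Γ : Type*) [Group Γ] [Countable Γ] [MulAction Γ X] [ContinuousConstSMul Γ X]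
    (hact : ∀ U : Set X, IsOpen U → U.Nonempty →
      ∃ x ∈ U, ∃ y ∈ U, x ≠ y ∧ ∃ γ : Γ, γ • x = y) :
    ¬ ∃ τ : TopologicalSpace ↥(fullGroup Γ X),
      @IsTopologicalGroup ↥(fullGroup Γ X) τ _ ∧ @T2Space ↥(fullGroup Γ X) τ ∧
      @SecondCountableTopology ↥(fullGroup Γ X) τ ∧
      @BaireSpace ↥(fullGroup Γ X) τ := by
  rintro ⟨τ, hTG, hT2, hSC, hBaire⟩
  classical
  letI : MetricSpace X := TopologicalSpace.metrizableSpaceMetric X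
  haveI : CompactSpace X := ‹CompactSpace X›
  haveI : TotallyDisconnectedSpace X := ‹TotallyDisconnectedSpace X›
  haveI : PerfectSpace X := ‹PerfectSpace X›
  letI := τ
  haveI := hTG
  haveI := hT2
  haveI := hSC
  haveI := hBaire
  haveI : Nonempty ↥(fullGroup Γ X) := ⟨1⟩
  -- a countable basis of nonempty open sets of X
  obtain ⟨bas, hbas_count, hbas_ne, hbasis⟩ := TopologicalSpace.exists_countable_basis X
  haveI : Countable ↥bas := hbas_count.to_subtype
  -- pointwise fixators of open sets are closed
  have hKclosed : ∀ B : Set X, IsOpen B →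
      IsClosed {g : ↥(fullGroup Γ X) | ∀ x ∈ B, (g : X ≃ₜ X) x = x} := by
    intro B hB
    rw [fix_eq_commuting hact hB]
    exact isClosed_biInter fun h _ =>
      isClosed_eq (continuous_mul_right h) (continuous_mul_left h)
  -- the countable closed cover of the full group
  let A : ↥bas × Γ → Set ↥(fullGroup Γ X) := fun i =>
    {g : ↥(fullGroup Γ X) | ∀ x ∈ (i.1 : Set X), (g : X ≃ₜ X) x = i.2 • x}
  have hAclosed : ∀ i, IsClosed (A i) := by
    rintro ⟨⟨B, hBbas⟩, γ⟩
    by_cases hne : (A (⟨B, hBbas⟩, γ)).Nonempty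
    · obtain ⟨g₀, hg₀⟩ := hne
      have heq : A (⟨B, hBbas⟩, γ) =
          (Homeomorph.mulLeft g₀) '' {g : ↥(fullGroup Γ X) | ∀ x ∈ B, (g : X ≃ₜ X) x = x} := by
        ext g
        simp only [Homeomorph.coe_mulLeft, mem_image, mem_setOf_eq]
        constructor
        · intro hg
          refine ⟨g₀⁻¹ * g, ?_, by group⟩
          intro x hx
          have h1 : (g : X ≃ₜ X) x = γ • x := hg x hx
          have h2 : (g₀ : X ≃ₜ X) x = γ • x := hg₀ x hx
          have h3 : ((g₀⁻¹ * g : ↥(fullGroup Γ X)) : X ≃ₜ X) x =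
              (g₀ : X ≃ₜ X).symm ((g : X ≃ₜ X) x) := rfl
          rw [h3, h1, ← h2]
          exact (g₀ : X ≃ₜ X).symm_apply_apply x
        · rintro ⟨k, hk, rfl⟩
          intro x hx
          have h3 : ((g₀ * k : ↥(fullGroup Γ X)) : X ≃ₜ X) x =
              (g₀ : X ≃ₜ X) ((k : X ≃ₜ X) x) := rfl
          rw [h3, hk x hx]
          exact hg₀ x hx
      rw [heq]
      exact (Homeomorph.mulLeft g₀).isClosedMap _ (hKclosed B (hbasis.isOpen hBbas))
    · rw [Set.not_nonempty_iff_eq_empty.mp hne]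
      exact isClosed_empty
  have hAcover : ⋃ i, A i = univ := by
    rw [Set.eq_univ_iff_forall]
    intro g
    have hXclosed : ∀ γ : Γ, IsClosed {x : X | (g : X ≃ₜ X) x = γ • x} :=
      fun γ => isClosed_eq (g : X ≃ₜ X).continuous (continuous_const_smul γ)
    have hXcover : ⋃ γ : Γ, {x : X | (g : X ≃ₜ X) x = γ • x} = univ := by
      rw [Set.eq_univ_iff_forall]
      intro x
      obtain ⟨γ, hγ⟩ := g.2 x
      exact mem_iUnion.mpr ⟨γ, hγ⟩
    obtain ⟨γ, hγint⟩ := nonempty_interior_of_iUnion_of_closed hXclosed hXcover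
    obtain ⟨x, hx⟩ := hγint
    obtain ⟨B, hBbas, hxB, hBsub⟩ := hbasis.exists_subset_of_mem_open hx isOpen_interior
    refine mem_iUnion.mpr ⟨(⟨B, hBbas⟩, γ), ?_⟩
    intro z hz
    exact interior_subset (s := {x : X | (g : X ≃ₜ X) x = γ • x}) (hBsub hz)
  -- Baire category in the full group
  obtain ⟨⟨⟨B₀, hB₀bas⟩, γ₀⟩, hi₀⟩ := nonempty_interior_of_iUnion_of_closed hAclosed hAcover
  obtain ⟨g₁, hg₁⟩ := hi₀
  have hg₁A : g₁ ∈ A (⟨B₀, hB₀bas⟩, γ₀) := interior_subset hg₁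
  have hB₀open : IsOpen B₀ := hbasis.isOpen hB₀bas
  have hB₀ne : B₀.Nonempty :=
    Set.nonempty_iff_ne_empty.mpr (fun h => hbas_ne (h ▸ hB₀bas))
  -- the fixator of B₀ has nonempty interior
  have hKeq : {g : ↥(fullGroup Γ X) | ∀ x ∈ B₀, (g : X ≃ₜ X) x = x} =
      (Homeomorph.mulLeft g₁⁻¹) '' (A (⟨B₀, hB₀bas⟩, γ₀)) := by
    ext g
    simp only [Homeomorph.coe_mulLeft, mem_image, mem_setOf_eq]
    constructor
    · intro hg
      refine ⟨g₁ * g, ?_, by group⟩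
      intro x hx
      have h3 : ((g₁ * g : ↥(fullGroup Γ X)) : X ≃ₜ X) x =
          (g₁ : X ≃ₜ X) ((g : X ≃ₜ X) x) := rfl
      rw [h3, hg x hx]
      exact hg₁A x hx
    · rintro ⟨a, ha, rfl⟩
      intro x hx
      have h3 : ((g₁⁻¹ * a : ↥(fullGroup Γ X)) : X ≃ₜ X) x =
          (g₁ : X ≃ₜ X).symm ((a : X ≃ₜ X) x) := rfl
      rw [h3, ha x hx, ← hg₁A x hx]
      exact (g₁ : X ≃ₜ X).symm_apply_apply x
  have hKint : (interior {g : ↥(fullGroup Γ X) | ∀ x ∈ B₀, (g : X ≃ₜ X) x = x}).Nonempty := by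
    rw [hKeq, ← Homeomorph.image_interior]
    exact ⟨_, mem_image_of_mem _ hg₁⟩
  -- the fixator is a subgroup
  have hKmul : ∀ {a b : ↥(fullGroup Γ X)},
      (∀ x ∈ B₀, (a : X ≃ₜ X) x = x) → (∀ x ∈ B₀, (b : X ≃ₜ X) x = x) →
      ∀ x ∈ B₀, ((a * b : ↥(fullGroup Γ X)) : X ≃ₜ X) x = x := by
    intro a b ha hb x hx
    have h3 : ((a * b : ↥(fullGroup Γ X)) : X ≃ₜ X) x =
        (a : X ≃ₜ X) ((b : X ≃ₜ X) x) := rfl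
    rw [h3, hb x hx]
    exact ha x hx
  have hKinv : ∀ {a : ↥(fullGroup Γ X)},
      (∀ x ∈ B₀, (a : X ≃ₜ X) x = x) →
      ∀ x ∈ B₀, ((a⁻¹ : ↥(fullGroup Γ X)) : X ≃ₜ X) x = x := by
    intro a ha x hx
    have h3 : ((a⁻¹ : ↥(fullGroup Γ X)) : X ≃ₜ X) x = (a : X ≃ₜ X).symm x := rfl
    rw [h3]
    apply (a : X ≃ₜ X).injective
    rw [Homeomorph.apply_symm_apply]
    exact (ha x hx).symm
  -- hence the fixator is open
  have hKopen : IsOpen {g : ↥(fullGroup Γ X) | ∀ x ∈ B₀, (g : X ≃ₜ X) x = x} := by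
    obtain ⟨u, hu⟩ := hKint
    have huK : ∀ x ∈ B₀, (u : X ≃ₜ X) x = x := interior_subset hu
    have hrep : {g : ↥(fullGroup Γ X) | ∀ x ∈ B₀, (g : X ≃ₜ X) x = x} =
        ⋃ k ∈ {g : ↥(fullGroup Γ X) | ∀ x ∈ B₀, (g : X ≃ₜ X) x = x},
          (Homeomorph.mulLeft (k * u⁻¹)) ''
            interior {g : ↥(fullGroup Γ X) | ∀ x ∈ B₀, (g : X ≃ₜ X) x = x} := by
      apply Subset.antisymm
      · intro k hk
        apply mem_biUnion hk
        refine ⟨u, hu, ?_⟩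
        show k * u⁻¹ * u = k
        group
      · intro w hw
        simp only [mem_iUnion, Homeomorph.coe_mulLeft, mem_image] at hw
        obtain ⟨k, hk, v, hv, rfl⟩ := hw
        exact hKmul (hKmul hk (hKinv huK)) (interior_subset hv)
    rw [hrep]
    exact isOpen_biUnion fun k _ => (Homeomorph.mulLeft _).isOpenMap _ isOpen_interior
  -- the uncountable family of pairwise disjoint open cosets
  obtain ⟨fam, hfam⟩ := exists_injective_family hact hB₀open hB₀ne
  have hVopen : ∀ S : Set ℕ, IsOpen ((Homeomorph.mulLeft (fam S)) ''
      {g : ↥(fullGroup Γ X) | ∀ x ∈ B₀, (g : X ≃ₜ X) x = x}) :=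
    fun S => (Homeomorph.mulLeft (fam S)).isOpenMap _ hKopen
  have hVne : ∀ S : Set ℕ, ((Homeomorph.mulLeft (fam S)) ''
      {g : ↥(fullGroup Γ X) | ∀ x ∈ B₀, (g : X ≃ₜ X) x = x}).Nonempty := by
    intro S
    exact ⟨_, mem_image_of_mem _ (show (1 : ↥(fullGroup Γ X)) ∈
      {g : ↥(fullGroup Γ X) | ∀ x ∈ B₀, (g : X ≃ₜ X) x = x} from fun x _ => rfl)⟩
  have hVdisj : Pairwise (Function.onFun Disjoint (fun S : Set ℕ => (Homeomorph.mulLeft (fam S)) ''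
      {g : ↥(fullGroup Γ X) | ∀ x ∈ B₀, (g : X ≃ₜ X) x = x})) := by
    intro S S' hne
    rw [Function.onFun, Set.disjoint_left]
    rintro z ⟨a, ha, hz⟩ ⟨a', ha', hz'⟩
    simp only [Homeomorph.coe_mulLeft] at hz hz'
    have h1 : fam S * a = fam S' * a' := hz.trans hz'.symm
    have h2 : ((fam S)⁻¹ * fam S' : ↥(fullGroup Γ X)) = a * a'⁻¹ := by
      have h3 : fam S' = fam S * a * a'⁻¹ := by rw [h1]; group
      rw [h3]; group
    obtain ⟨x, hxB, hmove⟩ := hfam S S' hne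
    apply hmove
    have h4 : ∀ x ∈ B₀, ((a * a'⁻¹ : ↥(fullGroup Γ X)) : X ≃ₜ X) x = x :=
      hKmul ha (hKinv ha')
    rw [h2]
    exact h4 x hxB
  haveI : Countable (Set ℕ) := hVdisj.countable_of_isOpen_disjoint hVopen hVne
  obtain ⟨f, hf⟩ := Countable.exists_injective_nat (Set ℕ)
  exact Function.cantor_injective f hf
end

section
/- Let Γ be a countable group acting by homeomorphisms on a Cantor space X such that for every nonempty open set U ⊆ X there exist distinct points x, y ∈ U and γ ∈ Γ with γ·x = y, let [R] be the full group of the action, and let Ω = {x ∈ X : x is an accumulation point of Γ·x}. Then for every countable subset {x_i : i ∈ ℕ} of Ω and every x ∈ Ω not belonging to {x_i : i ∈ ℕ}, there exists g ∈ [R] such that g(x) = x and g(x_i) ≠ x_i for all i. -/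
open Set Pointwise

/-- Claim in the proof of the main theorem of Section 3: given countably many points
`x_i` of `Ω` (the set of accumulation points of their own orbits) and `x ∈ Ω` distinct
from all `x_i`, there is an element of the full group fixing `x` and moving every
`x_i`. -/
theorem exists_fixing_and_moving {X : Type*} [TopologicalSpace X] [Nonempty X] [CompactSpace X]
    [TopologicalSpace.MetrizableSpace X] [TotallyDisconnectedSpace X] [PerfectSpace X]
    (Γ : Type*) [Group Γ] [Countable Γ] [MulAction Γ X] [ContinuousConstSMul Γ X]
    (hact : ∀ U : Set X, IsOpen U → U.Nonempty →
      ∃ x ∈ U, ∃ y ∈ U, x ≠ y ∧ ∃ γ : Γ, γ • x = y)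
    (x : X) (xi : ℕ → X)
    (hxi : ∀ i : ℕ, xi i ∈ closure (MulAction.orbit Γ (xi i) \ {xi i}))
    (hx : x ∈ closure (MulAction.orbit Γ x \ {x}))
    (hne : ∀ i : ℕ, x ≠ xi i) :
    ∃ g ∈ fullGroup Γ X, (g : X ≃ₜ X) x = x ∧ ∀ i : ℕ, (g : X ≃ₜ X) (xi i) ≠ xi i := by
  classical
  letI : MetricSpace X := TopologicalSpace.metrizableSpaceMetric X
  -- key one-step existence lemma
  have key : ∀ (n : ℕ) (C : Set X), IsClopen C → x ∉ C →
      ∃ (A B : Set X) (γ : Γ), IsClopen A ∧ IsClopen B ∧ B = γ • A ∧ Disjoint A B ∧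
        Disjoint (A ∪ B) C ∧ x ∉ A ∪ B ∧
        A ∪ B ⊆ Metric.ball (xi n) ((1/2) ^ n) ∧ (xi n ∈ A ∨ xi n ∈ C) := by
    intro n C hC hxC
    by_cases hmem : xi n ∈ C
    · refine ⟨∅, ∅, 1, isClopen_empty, isClopen_empty, ?_, ?_, ?_, ?_, ?_, Or.inr hmem⟩
      · simp
      · simp
      · simp
      · simp
      · simp
    · have hxn : x ≠ xi n := hne n
      have hr : (0 : ℝ) < (1/2) ^ n := by positivity
      set U₀ : Set X := Metric.ball (xi n) ((1/2) ^ n) ∩ Cᶜ ∩ {x}ᶜ with hU₀def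
      have hU₀open : IsOpen U₀ :=
        ((Metric.isOpen_ball.inter hC.isClosed.isOpen_compl).inter
          isClosed_singleton.isOpen_compl)
      have hxnU₀ : xi n ∈ U₀ :=
        ⟨⟨Metric.mem_ball_self hr, hmem⟩, fun h => hxn (Set.mem_singleton_iff.mp h).symm⟩
      obtain ⟨y, hyU, hyOrb⟩ := (mem_closure_iff.mp (hxi n)) U₀ hU₀open hxnU₀
      obtain ⟨γ, hγ⟩ := MulAction.mem_orbit_iff.mp hyOrb.1
      have hyne : y ≠ xi n := hyOrb.2
      obtain ⟨W, hW, hyW, hWsub⟩ :=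
        compact_exists_isClopen_in_isOpen (hU₀open.inter isClosed_singleton.isOpen_compl)
          (Set.mem_inter hyU (fun h => hyne (Set.mem_singleton_iff.mp h)))
      have hVopen : IsOpen ((γ⁻¹ • W ∩ U₀) ∩ Wᶜ) :=
        ((hW.isOpen.smul γ⁻¹).inter hU₀open).inter hW.isClosed.isOpen_compl
      have hxnV : xi n ∈ (γ⁻¹ • W ∩ U₀) ∩ Wᶜ := by
        refine ⟨⟨?_, hxnU₀⟩, fun h => (hWsub h).2 rfl⟩
        rw [Set.mem_inv_smul_set_iff, hγ]
        exact hyW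
      obtain ⟨A, hA, hxnA, hAsub⟩ := compact_exists_isClopen_in_isOpen hVopen hxnV
      refine ⟨A, γ • A, γ, hA, ⟨hA.isClosed.smul γ, hA.isOpen.smul γ⟩, rfl, ?_, ?_, ?_, ?_,
        Or.inl hxnA⟩
      · -- Disjoint A (γ • A)
        rw [Set.disjoint_left]
        intro z hz hz'
        obtain ⟨a, haA, rfl⟩ := hz'
        have : γ • a ∈ W := Set.mem_inv_smul_set_iff.mp (hAsub haA).1.1
        exact (hAsub hz).2 this
      · -- Disjoint (A ∪ γ • A) C
        rw [Set.disjoint_left]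
        rintro z (hz | hz) hzC
        · exact (hAsub hz).1.2.1.2 hzC
        · obtain ⟨a, haA, rfl⟩ := hz
          have : γ • a ∈ W := Set.mem_inv_smul_set_iff.mp (hAsub haA).1.1
          exact (hWsub this).1.1.2 hzC
      · -- x ∉ A ∪ γ • A
        rintro (hz | hz)
        · exact (hAsub hz).1.2.2 rfl
        · obtain ⟨a, haA, rfl⟩ := hz
          have : γ • a ∈ W := Set.mem_inv_smul_set_iff.mp (hAsub haA).1.1
          exact (hWsub this).1.2 rfl
      · -- A ∪ γ • A ⊆ ball
        rintro z (hz | hz)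
        · exact (hAsub hz).1.2.1.1
        · obtain ⟨a, haA, rfl⟩ := hz
          have : γ • a ∈ W := Set.mem_inv_smul_set_iff.mp (hAsub haA).1.1
          exact (hWsub this).1.1.1
  choose! FA FB Fγ hclA hclB hBeq hABd hdC hxno hball hmemA using key
  obtain ⟨D, hD0, hDs⟩ : ∃ D : ℕ → Set X, D 0 = ∅ ∧
      ∀ n, D (n + 1) = D n ∪ (FA n (D n) ∪ FB n (D n)) :=
    ⟨fun n => Nat.rec ∅ (fun m Dm => Dm ∪ (FA m Dm ∪ FB m Dm)) n, rfl, fun _ => rfl⟩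
  set A : ℕ → Set X := fun n => FA n (D n) with hAdef
  set B : ℕ → Set X := fun n => FB n (D n) with hBdef
  set γ' : ℕ → Γ := fun n => Fγ n (D n) with hγdef
  have hgood : ∀ n, IsClopen (D n) ∧ x ∉ D n := by
    intro n
    induction n with
    | zero => rw [hD0]; exact ⟨isClopen_empty, Set.notMem_empty x⟩
    | succ m ih =>
      rw [hDs m]
      exact ⟨(ih.1.union ((hclA m (D m) ih.1 ih.2).union (hclB m (D m) ih.1 ih.2))),
        fun h => h.elim ih.2 (hxno m (D m) ih.1 ih.2)⟩
  have hA' : ∀ n, IsClopen (A n) := fun n => hclA n (D n) (hgood n).1 (hgood n).2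
  have hB' : ∀ n, IsClopen (B n) := fun n => hclB n (D n) (hgood n).1 (hgood n).2
  have hBeq' : ∀ n, B n = γ' n • A n := fun n => hBeq n (D n) (hgood n).1 (hgood n).2
  have hABd' : ∀ n, Disjoint (A n) (B n) := fun n => hABd n (D n) (hgood n).1 (hgood n).2
  have hdC' : ∀ n, Disjoint (A n ∪ B n) (D n) := fun n => hdC n (D n) (hgood n).1 (hgood n).2
  have hxno' : ∀ n, x ∉ A n ∪ B n := fun n => hxno n (D n) (hgood n).1 (hgood n).2
  have hball' : ∀ n, A n ∪ B n ⊆ Metric.ball (xi n) ((1/2) ^ n) :=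
    fun n => hball n (D n) (hgood n).1 (hgood n).2
  have hmemA' : ∀ n, xi n ∈ A n ∨ xi n ∈ D n :=
    fun n => hmemA n (D n) (hgood n).1 (hgood n).2
  have hDmono : ∀ m n, m ≤ n → D m ⊆ D n := by
    intro m n h
    induction n with
    | zero => rw [Nat.le_zero.mp h]
    | succ k ih =>
      rcases Nat.lt_or_ge m (k + 1) with h' | h'
      · exact (ih (Nat.lt_succ_iff.mp h')).trans (by rw [hDs k]; exact Set.subset_union_left)
      · rw [Nat.le_antisymm h h']
  have hsubD : ∀ m n, m < n → A m ∪ B m ⊆ D n := by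
    intro m n h
    refine Set.Subset.trans ?_ (hDmono (m + 1) n h)
    rw [hDs m]
    exact Set.subset_union_right
  have hDmem : ∀ n z, z ∈ D n → ∃ m, m < n ∧ z ∈ A m ∪ B m := by
    intro n
    induction n with
    | zero => intro z hz; rw [hD0] at hz; exact absurd hz (Set.notMem_empty z)
    | succ k ih =>
      intro z hz
      rw [hDs k] at hz
      rcases hz with hz | hz
      · obtain ⟨m, hm, hm2⟩ := ih z hz
        exact ⟨m, hm.trans (Nat.lt_succ_self k), hm2⟩
      · exact ⟨k, Nat.lt_succ_self k, hz⟩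
  have hPW : ∀ m n, m < n → Disjoint (A n ∪ B n) (A m ∪ B m) :=
    fun m n h => (hdC' n).mono_right (hsubD m n h)
  have huniq : ∀ m n z, z ∈ A m ∪ B m → z ∈ A n ∪ B n → m = n := by
    intro m n z hm hn
    rcases lt_trichotomy m n with h | h | h
    · exact absurd hm (Set.disjoint_left.mp (hPW m n h) hn)
    · exact h
    · exact absurd hn (Set.disjoint_left.mp (hPW n m h) hm)
  obtain ⟨g0, hgA, hgB, hgId⟩ :
      ∃ g0 : X → X, (∀ n z, z ∈ A n → g0 z = γ' n • z) ∧
        (∀ n z, z ∈ B n → g0 z = (γ' n)⁻¹ • z) ∧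
        (∀ z, (∀ n, z ∉ A n ∪ B n) → g0 z = z) := by
    refine ⟨fun z => if h : ∃ n, z ∈ A n then γ' h.choose • z
      else if h' : ∃ n, z ∈ B n then (γ' h'.choose)⁻¹ • z else z, ?_, ?_, ?_⟩
    · intro n z hz
      have h : ∃ m, z ∈ A m := ⟨n, hz⟩
      simp only [dif_pos h]
      rw [huniq h.choose n z (Or.inl h.choose_spec) (Or.inl hz)]
    · intro n z hz
      have h : ¬∃ m, z ∈ A m := by
        rintro ⟨m, hm⟩
        have hmn := huniq m n z (Or.inl hm) (Or.inr hz)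
        subst hmn
        exact Set.disjoint_left.mp (hABd' m) hm hz
      have h' : ∃ m, z ∈ B m := ⟨n, hz⟩
      simp only [dif_neg h, dif_pos h']
      rw [huniq h'.choose n z (Or.inr h'.choose_spec) (Or.inr hz)]
    · intro z hz
      have h1 : ¬∃ n, z ∈ A n := fun ⟨n, hn⟩ => hz n (Or.inl hn)
      have h2 : ¬∃ n, z ∈ B n := fun ⟨n, hn⟩ => hz n (Or.inr hn)
      simp only [dif_neg h1, dif_neg h2]
  have hmapsAB : ∀ n z, z ∈ A n → g0 z ∈ B n := by
    intro n z hz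
    rw [hgA n z hz, hBeq' n]
    exact Set.smul_mem_smul_set hz
  have hmapsBA : ∀ n z, z ∈ B n → g0 z ∈ A n := by
    intro n z hz
    rw [hgB n z hz]
    have := hz
    rw [hBeq' n, Set.mem_smul_set_iff_inv_smul_mem] at this
    exact this
  have hinv : Function.Involutive g0 := by
    intro z
    by_cases hz : ∃ n, z ∈ A n ∪ B n
    · obtain ⟨n, hn⟩ := hz
      rcases hn with hn | hn
      · rw [hgA n z hn, hgB n (γ' n • z) (by rw [hBeq' n]; exact Set.smul_mem_smul_set hn),
          inv_smul_smul]
      · have hA : (γ' n)⁻¹ • z ∈ A n := by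
          have := hn; rw [hBeq' n, Set.mem_smul_set_iff_inv_smul_mem] at this; exact this
        rw [hgB n z hn, hgA n ((γ' n)⁻¹ • z) hA, smul_inv_smul]
    · push_neg at hz
      rw [hgId z hz, hgId z hz]
  have hcont : Continuous g0 := by
    rw [continuous_iff_continuousAt]
    intro z
    by_cases hz : ∃ n, z ∈ A n ∪ B n
    · obtain ⟨n, hn⟩ := hz
      rcases hn with hn | hn
      · exact ((continuous_const_smul (γ' n)).continuousAt).congr
          (Filter.eventuallyEq_of_mem ((hA' n).isOpen.mem_nhds hn)
            (fun w hw => (hgA n w hw).symm))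
      · exact ((continuous_const_smul (γ' n)⁻¹).continuousAt).congr
          (Filter.eventuallyEq_of_mem ((hB' n).isOpen.mem_nhds hn)
            (fun w hw => (hgB n w hw).symm))
    · push_neg at hz
      rw [Metric.continuousAt_iff]
      intro ε hε
      have hg0z : g0 z = z := hgId z hz
      obtain ⟨N, hN⟩ : ∃ N : ℕ, ((1 : ℝ)/2) ^ N < ε / 4 :=
        exists_pow_lt_of_lt_one (by positivity) (by norm_num)
      have hzD : z ∉ D N := by
        intro h
        obtain ⟨m, _, hm2⟩ := hDmem N z h
        exact hz m hm2
      obtain ⟨δ₀, hδ₀, hδball⟩ :=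
        Metric.isOpen_iff.mp (hgood N).1.isClosed.isOpen_compl z hzD
      refine ⟨min δ₀ (ε / 2), lt_min hδ₀ (by positivity), ?_⟩
      intro w hw
      rw [hg0z]
      have hwz : dist w z < ε / 2 := lt_of_lt_of_le hw (min_le_right _ _)
      by_cases hwAB : ∃ n, w ∈ A n ∪ B n
      · obtain ⟨n, hn⟩ := hwAB
        have hNn : N ≤ n := by
          by_contra h
          push_neg at h
          exact hδball (Metric.mem_ball.mpr (lt_of_lt_of_le hw (min_le_left _ _)))
            (hsubD n N h hn)
        have hpow : ((1 : ℝ)/2) ^ n ≤ (1/2) ^ N :=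
          pow_le_pow_of_le_one (by norm_num) (by norm_num) hNn
        have h1 : dist w (xi n) < (1/2 : ℝ) ^ n := Metric.mem_ball.mp (hball' n hn)
        have hg0w : g0 w ∈ A n ∪ B n := by
          rcases hn with hn | hn
          · exact Or.inr (hmapsAB n w hn)
          · exact Or.inl (hmapsBA n w hn)
        have h2 : dist (g0 w) (xi n) < (1/2 : ℝ) ^ n := Metric.mem_ball.mp (hball' n hg0w)
        have := dist_triangle (g0 w) (xi n) z
        have := dist_triangle (xi n) w z
        have hc : dist (xi n) w = dist w (xi n) := dist_comm _ _
        linarith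
      · push_neg at hwAB
        rw [hgId w hwAB]
        linarith
  let g : X ≃ₜ X :=
    { toEquiv := hinv.toPerm g0
      continuous_toFun := hcont
      continuous_invFun := hcont }
  have hgapp : ∀ z, g z = g0 z := fun _ => rfl
  refine ⟨g, ?_, ?_, ?_⟩
  · intro z
    by_cases hz : ∃ n, z ∈ A n ∪ B n
    · obtain ⟨n, hn⟩ := hz
      rcases hn with hn | hn
      · exact ⟨γ' n, by rw [hgapp, hgA n z hn]⟩
      · exact ⟨(γ' n)⁻¹, by rw [hgapp, hgB n z hn]⟩
    · push_neg at hz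
      exact ⟨1, by rw [hgapp, hgId z hz, one_smul]⟩
  · rw [hgapp, hgId x hxno']
  · intro i heq
    rw [hgapp] at heq
    rcases hmemA' i with hmem | hmem
    · have : g0 (xi i) ∈ B i := hmapsAB i (xi i) hmem
      rw [heq] at this
      exact Set.disjoint_left.mp (hABd' i) hmem this
    · obtain ⟨m, _, hm2⟩ := hDmem i (xi i) hmem
      rcases hm2 with hm2 | hm2
      · have : g0 (xi i) ∈ B m := hmapsAB m (xi i) hm2
        rw [heq] at this
        exact Set.disjoint_left.mp (hABd' m) hm2 this
      · have : g0 (xi i) ∈ A m := hmapsBA m (xi i) hm2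
        rw [heq] at this
        exact Set.disjoint_left.mp (hABd' m) this hm2
end

section
/- Let Γ be a countable group acting by homeomorphisms on a Cantor space X. Then the full group [R_Γ] is a coanalytic subset of the Polish group Homeo(X); that is, the complement of [R_Γ] in Homeo(X) is an analytic set. -/
open Set

section HomeoTopSetup

variable {X : Type*} [TopologicalSpace X]

/-- The topology on the homeomorphism group of `X`: the one induced by the embedding
`g ↦ (g, g⁻¹)` into `C(X, X) × C(X, X)`, where `C(X, X)` carries the compact-open
topology.  For a compact metrizable `X`, this is the usual Polish group topology on
`Homeo(X)`. -/
noncomputable instance : TopologicalSpace (X ≃ₜ X) :=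
  TopologicalSpace.induced
    (fun g : X ≃ₜ X => ((g : C(X, X)), (g.symm : C(X, X)))) inferInstance

lemma Homeomorph.continuous_pair :
    Continuous fun g : X ≃ₜ X => ((g : C(X, X)), (g.symm : C(X, X))) :=
  continuous_induced_dom

lemma Homeomorph.continuous_coe' : Continuous fun g : X ≃ₜ X => (g : C(X, X)) := by
  exact Continuous.fst Homeomorph.continuous_pair

lemma Homeomorph.continuous_coe_symm' :
    Continuous fun g : X ≃ₜ X => (g.symm : C(X, X)) := by
  exact Continuous.snd Homeomorph.continuous_pair

variable [CompactSpace X] [TopologicalSpace.MetrizableSpace X]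

instance : IsTopologicalGroup (X ≃ₜ X) where
  continuous_mul := by
    apply continuous_induced_rng.2
    show Continuous fun p : (X ≃ₜ X) × (X ≃ₜ X) =>
      (((p.1 * p.2 : X ≃ₜ X) : C(X, X)), (((p.1 * p.2 : X ≃ₜ X)).symm : C(X, X)))
    apply Continuous.prodMk
    · have h : Continuous fun p : C(X, X) × C(X, X) => p.2.comp p.1 :=
        ContinuousMap.continuous_comp'
      exact h.comp ((Homeomorph.continuous_coe'.comp continuous_snd).prodMk
        (Homeomorph.continuous_coe'.comp continuous_fst))
    · have h : Continuous fun p : C(X, X) × C(X, X) => p.2.comp p.1 :=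
        ContinuousMap.continuous_comp'
      exact h.comp ((Homeomorph.continuous_coe_symm'.comp continuous_fst).prodMk
        (Homeomorph.continuous_coe_symm'.comp continuous_snd))
  continuous_inv := by
    apply continuous_induced_rng.2
    show Continuous fun g : X ≃ₜ X =>
      (((g⁻¹ : X ≃ₜ X) : C(X, X)), ((g⁻¹ : X ≃ₜ X).symm : C(X, X)))
    exact Homeomorph.continuous_coe_symm'.prodMk Homeomorph.continuous_coe'

end HomeoTopSetup


/-- The full group of an action of a countable group by homeomorphisms on a Cantor space
is a coanalytic subset of `Homeo(X)`: its complement is analytic. -/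
theorem fullGroup_coanalytic {X : Type*} [TopologicalSpace X] [Nonempty X] [CompactSpace X]
    [TopologicalSpace.MetrizableSpace X] [TotallyDisconnectedSpace X] [PerfectSpace X]
    (Γ : Type*) [Group Γ] [Countable Γ] [MulAction Γ X] [ContinuousConstSMul Γ X] :
    MeasureTheory.AnalyticSet ((fullGroup Γ X : Set (X ≃ₜ X))ᶜ) := by
  classical
  letI := TopologicalSpace.metrizableSpaceMetric X
  haveI : PolishSpace X := inferInstance
  haveI : PolishSpace C(X, X) := inferInstance
  -- `Homeo(X)` is Polish, being closed-embedded in `C(X,X) × C(X,X)`.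
  have hcomp : Continuous fun p : C(X, X) × C(X, X) => p.1.comp p.2 := by
    exact ContinuousMap.continuous_comp'.comp (continuous_snd.prodMk continuous_fst)
  have hcomp' : Continuous fun p : C(X, X) × C(X, X) => p.2.comp p.1 := by
    exact ContinuousMap.continuous_comp'.comp (continuous_fst.prodMk continuous_snd)
  have hj : Topology.IsClosedEmbedding
      (fun g : X ≃ₜ X => ((g : C(X, X)), (g.symm : C(X, X)))) := by
    refine ⟨⟨⟨rfl⟩, ?_⟩, ?_⟩
    · intro g g' h
      have h1 : (g : C(X, X)) = (g' : C(X, X)) := congrArg Prod.fst h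
      exact Homeomorph.ext fun x => ContinuousMap.congr_fun h1 x
    · have : range (fun g : X ≃ₜ X => ((g : C(X, X)), (g.symm : C(X, X)))) =
          {p : C(X, X) × C(X, X) | p.1.comp p.2 = ContinuousMap.id X ∧
            p.2.comp p.1 = ContinuousMap.id X} := by
        ext p
        constructor
        · rintro ⟨g, rfl⟩
          constructor
          · exact ContinuousMap.ext fun x => g.apply_symm_apply x
          · exact ContinuousMap.ext fun x => g.symm_apply_apply x
        · rintro ⟨h1, h2⟩
          refine ⟨Homeomorph.mk
            ⟨p.1, p.2, fun x => ContinuousMap.congr_fun h2 x,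
              fun x => ContinuousMap.congr_fun h1 x⟩
            p.1.continuous p.2.continuous, ?_⟩
          exact Prod.ext (ContinuousMap.ext fun _ => rfl) (ContinuousMap.ext fun _ => rfl)
      rw [this]
      exact (isClosed_singleton.preimage hcomp).inter (isClosed_singleton.preimage hcomp')
  haveI : PolishSpace (X ≃ₜ X) := hj.polishSpace
  -- The "bad pairs" set
  set S : Set ((X ≃ₜ X) × X) := {p | ∀ γ : Γ, p.1 p.2 ≠ γ • p.2} with hS
  have heval : Continuous fun p : (X ≃ₜ X) × X => p.1 p.2 := by
    have : Continuous fun p : (X ≃ₜ X) × X => (((p.1 : C(X, X)), p.2) : C(X, X) × X) :=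
      (Homeomorph.continuous_coe'.comp continuous_fst).prodMk continuous_snd
    have hev : Continuous fun q : C(X, X) × X => q.1 q.2 := ContinuousEval.continuous_eval
    exact hev.comp this
  have hopen : ∀ γ : Γ, IsOpen {p : (X ≃ₜ X) × X | p.1 p.2 ≠ γ • p.2} := by
    intro γ
    have hc : IsClosed {p : (X ≃ₜ X) × X | p.1 p.2 = γ • p.2} := by
      have : Continuous fun p : (X ≃ₜ X) × X => ((p.1 p.2, γ • p.2) : X × X) :=
        heval.prodMk ((continuous_const_smul γ).comp continuous_snd)
      exact isClosed_diagonal.preimage this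
    exact hc.isOpen_compl
  borelize ((X ≃ₜ X) × X)
  have hSmeas : MeasurableSet S := by
    have : S = ⋂ γ : Γ, {p : (X ≃ₜ X) × X | p.1 p.2 ≠ γ • p.2} := by
      ext p; simp [hS]
    rw [this]
    exact MeasurableSet.iInter fun γ => (hopen γ).measurableSet
  have himg : Prod.fst '' S = ((fullGroup Γ X : Set (X ≃ₜ X)))ᶜ := by
    ext g
    simp only [mem_image, mem_compl_iff, hS, mem_setOf_eq]
    constructor
    · rintro ⟨⟨g', x⟩, hp, rfl⟩ hg
      obtain ⟨γ, hγ⟩ := hg x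
      exact hp γ hγ
    · intro hg
      have : ¬ ∀ x : X, ∃ γ : Γ, g x = γ • x := hg
      push_neg at this
      obtain ⟨x, hx⟩ := this
      exact ⟨(g, x), hx, rfl⟩
  rw [← himg]
  exact hSmeas.analyticSet.image_of_continuous continuous_fst
end

section
/- Let φ be a minimal homeomorphism of a Cantor space X. For g ∈ Homeo(X), define the tree T_g on the set of clopen subsets of X by: a finite sequence (U_0, …, U_n) of clopen sets belongs to T_g if and only if each U_j is nonempty, U_{j+1} ⊆ U_j for all j ∈ {0,…,n−1}, and for all j ∈ {0,…,n} and all x ∈ U_j one has g(x) ≠ φ^j(x) and g(x) ≠ φ^{−j}(x). Then g belongs to the full group [φ] if and only if T_g is well-founded, i.e., T_g has no infinite branch (there is no infinite sequence (U_j)_{j∈ℕ} all of whose finite initial segments lie in T_g). -/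
open Set

section FullGroupZ

variable {X : Type*} [TopologicalSpace X]

/-- The full group of the `ℤ`-action generated by a homeomorphism `φ`: all
homeomorphisms `g` such that every `g x` lies in the `φ`-orbit of `x`. -/
def fullGroupZ (φ : X ≃ₜ X) : Subgroup (X ≃ₜ X) where
  carrier := {g : X ≃ₜ X | ∀ x : X, ∃ n : ℤ, g x = (φ ^ n) x}
  one_mem' := fun x => ⟨0, by rw [zpow_zero]⟩
  mul_mem' := by
    intro a b ha hb x
    obtain ⟨n, hn⟩ := hb x
    obtain ⟨m, hm⟩ := ha (b x)
    refine ⟨m + n, ?_⟩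
    show a (b x) = (φ ^ (m + n)) x
    rw [hm, hn, zpow_add]
    rfl
  inv_mem' := by
    intro a ha x
    obtain ⟨n, hn⟩ := ha ((a⁻¹ : X ≃ₜ X) x)
    have hx : a ((a⁻¹ : X ≃ₜ X) x) = x := a.apply_symm_apply x
    rw [hx] at hn
    refine ⟨-n, ?_⟩
    have key : ∀ y : X, (φ ^ (-n) : X ≃ₜ X) ((φ ^ n : X ≃ₜ X) y) = y := by
      intro y
      have h1 : (φ ^ (-n) * φ ^ n : X ≃ₜ X) = 1 := by
        rw [← zpow_add, neg_add_cancel, zpow_zero]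
      calc (φ ^ (-n) : X ≃ₜ X) ((φ ^ n : X ≃ₜ X) y)
          = ((φ ^ (-n) * φ ^ n : X ≃ₜ X)) y := rfl
        _ = y := by rw [h1]; rfl
    calc (a⁻¹ : X ≃ₜ X) x = (φ ^ (-n) : X ≃ₜ X) ((φ ^ n : X ≃ₜ X) ((a⁻¹ : X ≃ₜ X) x)) :=
          (key _).symm
      _ = (φ ^ (-n) : X ≃ₜ X) x := by rw [← hn]

/-- A homeomorphism is minimal if every orbit `{φ ^ n x : n ∈ ℤ}` is dense. -/
def Homeomorph.IsMinimal (φ : X ≃ₜ X) : Prop :=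
  ∀ x : X, Dense (Set.range fun n : ℤ => (φ ^ n) x)

end FullGroupZ


section Trees

variable {X : Type*} [TopologicalSpace X]

/-- The tree `T_g` associated to `g` (relative to `φ`): finite decreasing sequences
`(U_0, …, U_n)` of nonempty clopen sets such that `g x ≠ φ^{±j} x` for all `x ∈ U_j`. -/
def treeOf (φ g : X ≃ₜ X) : Set (List (Set X)) :=
  {l : List (Set X) |
    (∀ U ∈ l, IsClopen U ∧ U.Nonempty) ∧
    (∀ j : ℕ, ∀ h : j + 1 < l.length,
      l.get ⟨j + 1, h⟩ ⊆ l.get ⟨j, Nat.lt_of_succ_lt h⟩) ∧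
    (∀ j : ℕ, ∀ h : j < l.length, ∀ x ∈ l.get ⟨j, h⟩,
      g x ≠ (φ ^ (j : ℤ)) x ∧ g x ≠ (φ ^ (-(j : ℤ))) x)}

/-- The one-step extension relation on nodes of a tree `T`:
`extRel T l₁ l₂` iff `l₁ ∈ T` and `l₁` is a one-step extension of `l₂`.
A tree is well-founded (has no infinite branch) iff this relation is well-founded. -/
def extRel (T : Set (List (Set X))) (l₁ l₂ : List (Set X)) : Prop :=
  l₁ ∈ T ∧ ∃ U : Set X, l₁ = l₂ ++ [U]

/-- The ordinal rank of a tree: the rank of the root (the node of largest rank) plus one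
when the tree is well-founded, and `0` (a junk value) otherwise. -/
noncomputable def treeRank (T : Set (List (Set X))) : Ordinal := by
  classical
  exact if h : WellFounded (extRel T) then
    @IsWellFounded.rank _ (extRel T) ⟨h⟩ ([] : List (Set X)) + 1
  else 0

end Trees


/-- Lemma: a homeomorphism `g` belongs to the full group of a minimal homeomorphism `φ`
if and only if the associated tree `T_g` is well-founded, i.e. has no infinite branch. -/
theorem mem_fullGroup_iff_tree_wellFounded {X : Type*} [TopologicalSpace X] [Nonempty X] [CompactSpace X]
    [TopologicalSpace.MetrizableSpace X] [TotallyDisconnectedSpace X] [PerfectSpace X]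
    (φ : X ≃ₜ X) (hmin : φ.IsMinimal) (g : X ≃ₜ X) :
    g ∈ fullGroupZ φ ↔
      ¬ ∃ f : ℕ → Set X, ∀ n : ℕ, (List.ofFn fun i : Fin n => f i) ∈ treeOf φ g := by
  haveI : T2Space X := by
    letI := TopologicalSpace.metrizableSpaceMetric X
    infer_instance
  constructor
  · rintro hg ⟨f, hf⟩
    -- extract properties of the branch
    have hcl : ∀ n, IsClopen (f n) ∧ (f n).Nonempty := by
      intro n
      exact (hf (n + 1)).1 (f n)
        (List.mem_ofFn.2 ⟨⟨n, n.lt_succ_self⟩, rfl⟩)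
    have hdec : ∀ n, f (n + 1) ⊆ f n := by
      intro n
      have h := (hf (n + 2)).2.1 n (by simp)
      rw [List.get_ofFn, List.get_ofFn] at h
      exact h
    have hneq : ∀ j : ℕ, ∀ x ∈ f j,
        g x ≠ (φ ^ (j : ℤ)) x ∧ g x ≠ (φ ^ (-(j : ℤ))) x := by
      intro j x hx
      have h := (hf (j + 1)).2.2 j (by simp) x (by rw [List.get_ofFn]; exact hx)
      exact h
    have hne : (⋂ n, f n).Nonempty := by
      apply IsCompact.nonempty_iInter_of_sequence_nonempty_isCompact_isClosed f hdec
        (fun n => (hcl n).2) ((hcl 0).1.isClosed.isCompact) (fun n => (hcl n).1.isClosed)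
    obtain ⟨x, hx⟩ := hne
    obtain ⟨m, hm⟩ := hg x
    have hxj : x ∈ f m.natAbs := mem_iInter.1 hx m.natAbs
    rcases Int.natAbs_eq m with h | h
    · exact (hneq m.natAbs x hxj).1 (by rw [hm, ← h])
    · exact (hneq m.natAbs x hxj).2 (by rw [hm, ← h])
  · intro hnb
    by_contra hg
    apply hnb
    simp only [fullGroupZ, Subgroup.mem_mk, Set.mem_setOf_eq, not_forall] at hg
    change ¬ (∀ x : X, ∃ n : ℤ, g x = (φ ^ n) x) at hg; rw [not_forall] at hg
    obtain ⟨x, hx⟩ := hg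
    push_neg at hx
    set V : ℕ → Set X := fun j => {y | g y ≠ (φ ^ (j : ℤ)) y ∧ g y ≠ (φ ^ (-(j : ℤ))) y} with hV
    have hVopen : ∀ j, IsOpen (V j) := by
      intro j
      have h1 : IsOpen {y | g y ≠ (φ ^ (j : ℤ)) y} :=
        (isClosed_eq g.continuous (φ ^ (j : ℤ)).continuous).isOpen_compl
      have h2 : IsOpen {y | g y ≠ (φ ^ (-(j : ℤ))) y} :=
        (isClosed_eq g.continuous (φ ^ (-(j : ℤ))).continuous).isOpen_compl
      exact h1.inter h2
    have hxV : ∀ j, x ∈ V j := fun j => ⟨hx (j : ℤ), hx (-(j : ℤ))⟩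
    have key : ∀ j : ℕ, ∃ W : Set X, IsClopen W ∧ x ∈ W ∧ W ⊆ V j := fun j =>
      compact_exists_isClopen_in_isOpen (hVopen j) (hxV j)
    choose W hWc hWx hWV using key
    refine ⟨fun n => ⋂ j ∈ Finset.range (n + 1), W j, ?_⟩
    intro n
    have hfc : ∀ n : ℕ, IsClopen (⋂ j ∈ Finset.range (n + 1), W j) := fun n =>
      isClopen_biInter_finset fun j _ => hWc j
    have hfx : ∀ n : ℕ, x ∈ ⋂ j ∈ Finset.range (n + 1), W j := fun n =>
      mem_iInter₂.2 fun j _ => hWx j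
    have hmono : ∀ n : ℕ, (⋂ j ∈ Finset.range (n + 2), W j) ⊆ ⋂ j ∈ Finset.range (n + 1), W j := by
      intro n y hy
      exact mem_iInter₂.2 fun j hj => mem_iInter₂.1 hy j (Finset.mem_range.2
        (lt_trans (Finset.mem_range.1 hj) (Nat.lt_succ_self _)))
    have hfV : ∀ n : ℕ, (⋂ j ∈ Finset.range (n + 1), W j) ⊆ V n := by
      intro n y hy
      exact hWV n (mem_iInter₂.1 hy n (Finset.mem_range.2 (Nat.lt_succ_self _)))
    refine ⟨?_, ?_, ?_⟩
    · intro U hU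
      rw [List.mem_ofFn] at hU
      obtain ⟨i, rfl⟩ := hU
      exact ⟨hfc i, ⟨x, hfx i⟩⟩
    · intro j hj
      simp only [List.length_ofFn] at hj
      rw [List.get_ofFn, List.get_ofFn]
      exact hmono j
    · intro j hj y hy
      simp only [List.length_ofFn] at hj
      rw [List.get_ofFn] at hy
      exact hfV j hy
end

section
/- Let φ be a minimal homeomorphism of a Cantor space X. For g ∈ Homeo(X), let T_g be the tree of finite sequences (U_0, …, U_n) of nonempty clopen subsets of X with U_{j+1} ⊆ U_j and such that g(x) ≠ φ^{±j}(x) for all x ∈ U_j and all j, and let ρ(g) denote the ordinal rank of T_g when T_g is well-founded. If g ∈ [φ] satisfies ρ(g) ≥ ω and h belongs to the topological full group [[φ]], then there are only finitely many ordinals between ρ(g) and ρ(hg); that is, there exists k < ω such that ρ(hg) ≤ ρ(g) + k and ρ(g) ≤ ρ(hg) + k. -/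
open Set

section TopFullGroup

variable {X : Type*} [TopologicalSpace X]

/-- The topological full group of `φ`: homeomorphisms that coincide with a fixed power
of `φ` on each piece of some finite clopen partition of `X`. -/
def topFullGroupZ (φ : X ≃ₜ X) : Set (X ≃ₜ X) :=
  {g : X ≃ₜ X | ∃ n : ℕ, ∃ U : Fin n → Set X,
    (∀ i, IsClopen (U i)) ∧ (⋃ i, U i) = Set.univ ∧
    (Pairwise fun i j => Disjoint (U i) (U j)) ∧
    ∀ i, ∃ k : ℤ, ∀ x ∈ U i, g x = (φ ^ k) x}

end TopFullGroup


section Lemma44Aux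

variable {X : Type*} [TopologicalSpace X]

private lemma zpow_apply_zpow' (φ : X ≃ₜ X) (a b : ℤ) (x : X) :
    (φ ^ a) ((φ ^ b) x) = (φ ^ (a + b)) x := by
  rw [← Homeomorph.mul_apply', ← zpow_add]

private lemma zpow_cancel' (φ : X ≃ₜ X) (m : ℤ) (y : X) :
    (φ ^ (-m)) ((φ ^ m) y) = y := by
  rw [zpow_apply_zpow', neg_add_cancel, zpow_zero]; rfl

private lemma tree_subset' {φ g : X ≃ₜ X} {l : List (Set X)} (hl : l ∈ treeOf φ g)
    {i j : ℕ} (hij : i ≤ j) (hj : j < l.length) :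
    l[j] ⊆ l[i]'(lt_of_le_of_lt hij hj) := by
  induction j, hij using Nat.le_induction with
  | base => exact subset_rfl
  | succ j hij ih =>
    intro x hx
    have h1 := hl.2.1 j hj
    simp only [List.get_eq_getElem] at h1
    exact ih (Nat.lt_of_succ_lt hj) (h1 hx)

private lemma tree_ne' {φ g : X ≃ₜ X} {l : List (Set X)} (hl : l ∈ treeOf φ g)
    {j : ℕ} (hj : j < l.length) {x : X} (hx : x ∈ l[j])
    {m : ℤ} (hm : m.natAbs ≤ j) : g x ≠ (φ ^ m) x := by
  have hj' : m.natAbs < l.length := lt_of_le_of_lt hm hj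
  have hx' : x ∈ l[m.natAbs]'hj' := tree_subset' hl hm hj hx
  have h3 := hl.2.2 m.natAbs hj' x (by simpa only [List.get_eq_getElem] using hx')
  rcases Int.natAbs_eq m with hcase | hcase
  · rw [hcase]; exact h3.1
  · rw [hcase]; exact h3.2

private lemma drop_mem_treeOf' {φ g h : X ≃ₜ X} {N : ℕ}
    (hk : ∀ y : X, ∃ m : ℤ, m.natAbs ≤ N ∧ h y = (φ ^ m) y)
    {l : List (Set X)} (hl : l ∈ treeOf φ g) :
    l.drop N ∈ treeOf φ (h * g) := by
  refine ⟨fun U hU => hl.1 U (List.drop_subset _ _ hU), ?_, ?_⟩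
  · intro j hj
    simp only [List.get_eq_getElem, List.getElem_drop]
    have hlen : N + j + 1 < l.length := by
      have := hj; simp only [List.length_drop] at this; omega
    have h2 := hl.2.1 (N + j) hlen
    simp only [List.get_eq_getElem] at h2
    exact h2
  · intro j hj x hx
    simp only [List.get_eq_getElem, List.getElem_drop] at hx
    have hjN : N + j < l.length := by
      have := hj; simp only [List.length_drop] at this; omega
    obtain ⟨m, hmN, hm⟩ := hk (g x)
    have key : ∀ p : ℤ, p.natAbs ≤ j → (h * g) x ≠ (φ ^ p) x := by
      intro p hp heq
      have h4 : (φ ^ m) (g x) = (φ ^ p) x := by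
        rw [← hm]; exact heq
      have h5 : g x = (φ ^ (-m + p)) x := by
        have h6 := congrArg (φ ^ (-m) : X ≃ₜ X) h4
        rwa [zpow_cancel', zpow_apply_zpow'] at h6
      have hq : (-m + p).natAbs ≤ N + j := by
        have h6 := Int.natAbs_add_le (-m) p
        simp only [Int.natAbs_neg] at h6
        omega
      exact tree_ne' hl hjN hx hq h5
    constructor
    · exact key (j : ℤ) (by simp)
    · exact key (-(j : ℤ)) (by simp)

private lemma wf_transfer' {T T' : Set (List (Set X))} {N : ℕ}
    (hmap : ∀ l ∈ T', l.drop N ∈ T)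
    (hwf : WellFounded (extRel T)) : WellFounded (extRel T') := by
  have acc_big : ∀ a : List (Set X), Acc (extRel T) a →
      ∀ l : List (Set X), List.drop N l = a → N ≤ l.length → Acc (extRel T') l := by
    intro a ha
    induction ha with
    | intro a _ ih =>
      intro l hla hlen
      constructor
      intro c hc
      obtain ⟨hcT', U, hcU⟩ := hc
      have hdrop : List.drop N c = a ++ [U] := by
        rw [hcU, List.drop_append_of_le_length hlen, hla]
      have hrel : extRel T (List.drop N c) a := by
        rw [hdrop]
        exact ⟨hdrop ▸ hmap c hcT', U, by rw [← hla]⟩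
      refine ih _ hrel c rfl ?_
      rw [hcU, List.length_append]
      simp
      omega
  have key : ∀ d : ℕ, ∀ l : List (Set X), N ≤ l.length + d → Acc (extRel T') l := by
    intro d
    induction d with
    | zero =>
      intro l hl
      exact acc_big (List.drop N l) (hwf.apply _) l rfl (by omega)
    | succ d ihd =>
      intro l hl
      constructor
      intro c hc
      obtain ⟨-, U, hcU⟩ := hc
      refine ihd c ?_
      rw [hcU, List.length_append]
      simp
      omega
  exact ⟨fun l => key N l (by omega)⟩

private lemma rank_transfer' {T T' : Set (List (Set X))} {N : ℕ}
    (hmap : ∀ l ∈ T, l.drop N ∈ T')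
    (hwf : WellFounded (extRel T)) (hwf' : WellFounded (extRel T'))
    (l : List (Set X)) :
    @IsWellFounded.rank _ (extRel T) ⟨hwf⟩ l ≤
      @IsWellFounded.rank _ (extRel T') ⟨hwf'⟩ (l.drop N) + ((N - l.length : ℕ) : Ordinal) := by
  letI i1 : IsWellFounded _ (extRel T) := ⟨hwf⟩
  letI i2 : IsWellFounded _ (extRel T') := ⟨hwf'⟩
  induction l using hwf.induction with
  | _ l ih =>
    rw [IsWellFounded.rank_eq]
    apply Ordinal.iSup_le
    rintro ⟨c, hc⟩
    obtain ⟨hcT, U, hcU⟩ := hc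
    have hclen : c.length = l.length + 1 := by rw [hcU]; simp
    have ihc := ih c ⟨hcT, U, hcU⟩
    by_cases hNl : l.length < N
    · have hdrop : c.drop N = ([] : List (Set X)) :=
        List.drop_eq_nil_of_le (by omega)
      have hdrop' : l.drop N = ([] : List (Set X)) :=
        List.drop_eq_nil_of_le (by omega)
      rw [hdrop, hclen] at ihc
      rw [hdrop', ← Ordinal.add_one_eq_succ]
      calc @IsWellFounded.rank _ (extRel T) ⟨hwf⟩ c + 1
          ≤ (@IsWellFounded.rank _ (extRel T') ⟨hwf'⟩ []
              + ((N - (l.length + 1) : ℕ) : Ordinal)) + 1 := add_le_add_left ihc 1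
        _ = @IsWellFounded.rank _ (extRel T') ⟨hwf'⟩ []
              + (((N - (l.length + 1) : ℕ) : Ordinal) + 1) := by rw [add_assoc]
        _ = @IsWellFounded.rank _ (extRel T') ⟨hwf'⟩ []
              + ((N - l.length : ℕ) : Ordinal) := by
            congr 1
            norm_cast
            omega
    · push_neg at hNl
      have hzero : N - l.length = 0 := by omega
      have hzero' : N - c.length = 0 := by omega
      rw [hzero'] at ihc
      simp only [Nat.cast_zero, add_zero] at ihc
      rw [hzero]
      simp only [Nat.cast_zero, add_zero]
      have hrel : extRel T' (c.drop N) (l.drop N) := by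
        refine ⟨hmap c hcT, U, ?_⟩
        rw [hcU, List.drop_append_of_le_length hNl]
      have hlt : IsWellFounded.rank (extRel T') (List.drop N c) < IsWellFounded.rank (extRel T') (List.drop N l) := IsWellFounded.rank_lt_of_rel hrel
      exact Order.succ_le_of_lt (lt_of_le_of_lt ihc hlt)

private lemma treeRank_le' {T T' : Set (List (Set X))} {N : ℕ}
    (hmap : ∀ l ∈ T, l.drop N ∈ T') (hmap' : ∀ l ∈ T', l.drop N ∈ T) :
    treeRank T ≤ treeRank T' + (N : Ordinal) := by
  by_cases hwf : WellFounded (extRel T)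
  · have hwf' : WellFounded (extRel T') := wf_transfer' hmap' hwf
    rw [treeRank, treeRank, dif_pos hwf, dif_pos hwf']
    have hr := rank_transfer' hmap hwf hwf' []
    simp only [List.drop_nil, List.length_nil, Nat.sub_zero] at hr
    calc @IsWellFounded.rank _ (extRel T) ⟨hwf⟩ [] + 1
        ≤ (@IsWellFounded.rank _ (extRel T') ⟨hwf'⟩ [] + (N : Ordinal)) + 1 :=
          add_le_add_left hr 1
      _ = (@IsWellFounded.rank _ (extRel T') ⟨hwf'⟩ [] + 1) + (N : Ordinal) := by
          rw [add_assoc, add_assoc]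
          congr 1
          norm_cast
          omega
  · have hwf' : ¬ WellFounded (extRel T') := fun hwf' => hwf (wf_transfer' hmap hwf')
    rw [treeRank, treeRank, dif_neg hwf, dif_neg hwf']
    simp

end Lemma44Aux


/-- Lemma 4.4: if `g ∈ [φ]` has tree rank at least `ω` and `h` belongs to the topological
full group `[[φ]]`, then there are only finitely many ordinals between `ρ(g)` and
`ρ(hg)`. -/
theorem rank_invariant_topFullGroup {X : Type*} [TopologicalSpace X] [Nonempty X] [CompactSpace X]
    [TopologicalSpace.MetrizableSpace X] [TotallyDisconnectedSpace X] [PerfectSpace X]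
    (φ : X ≃ₜ X) (hmin : φ.IsMinimal) (g h : X ≃ₜ X)
    (hg : g ∈ fullGroupZ φ)
    (hrank : Ordinal.omega0 ≤ treeRank (treeOf φ g))
    (hh : h ∈ topFullGroupZ φ) :
    ∃ k : ℕ, treeRank (treeOf φ (h * g)) ≤ treeRank (treeOf φ g) + (k : Ordinal) ∧
      treeRank (treeOf φ g) ≤ treeRank (treeOf φ (h * g)) + (k : Ordinal) := by
  classical
  obtain ⟨n, U, hUclopen, hUcover, hUdisj, hUpow⟩ := hh
  choose k hk using hUpow
  set N : ℕ := Finset.univ.sup fun i => (k i).natAbs with hNdef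
  have hkh : ∀ y : X, ∃ m : ℤ, m.natAbs ≤ N ∧ h y = (φ ^ m) y := by
    intro y
    have hy : y ∈ ⋃ i, U i := by rw [hUcover]; exact Set.mem_univ y
    obtain ⟨i, hi⟩ := Set.mem_iUnion.1 hy
    have hle : (k i).natAbs ≤ N := by
      rw [hNdef]
      exact Finset.le_sup (f := fun j => (k j).natAbs) (Finset.mem_univ i)
    exact ⟨k i, hle, hk i y hi⟩
  have hkh' : ∀ y : X, ∃ m : ℤ, m.natAbs ≤ N ∧ (h⁻¹ : X ≃ₜ X) y = (φ ^ m) y := by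
    intro y
    obtain ⟨m, hm1, hm2⟩ := hkh ((h⁻¹ : X ≃ₜ X) y)
    refine ⟨-m, by simpa [Int.natAbs_neg] using hm1, ?_⟩
    have hy : h ((h⁻¹ : X ≃ₜ X) y) = y := h.apply_symm_apply y
    have h5 : (φ ^ (-m)) y = (φ ^ (-m)) ((φ ^ m) ((h⁻¹ : X ≃ₜ X) y)) := by
      rw [← hm2, hy]
    rw [h5, zpow_cancel']
  have mapA : ∀ l ∈ treeOf φ g, l.drop N ∈ treeOf φ (h * g) :=
    fun l hl => drop_mem_treeOf' hkh hl
  have mapB : ∀ l ∈ treeOf φ (h * g), l.drop N ∈ treeOf φ g := by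
    intro l hl
    have h6 := drop_mem_treeOf' hkh' hl
    rwa [inv_mul_cancel_left] at h6
  exact ⟨N, treeRank_le' mapB mapA, treeRank_le' mapA mapB⟩
end

section
/- Let G be a Polish group which has a comeager conjugacy class. Then every element of G is a commutator: for every g ∈ G there exist a, b ∈ G with g = a b a⁻¹ b⁻¹. -/
/-- Proposition 5.4 (folklore): in a Polish group with a comeager conjugacy class, every
element is a commutator. -/
theorem commutator_of_comeager_conjugacy_class {G : Type*} [Group G] [TopologicalSpace G]
    [IsTopologicalGroup G] [PolishSpace G]
    (hcomeager : ∃ g : G, {x : G | ∃ h : G, h * g * h⁻¹ = x} ∈ residual G) :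
    ∀ g : G, ∃ a b : G, g = a * b * a⁻¹ * b⁻¹ := by
  letI := TopologicalSpace.upgradeIsCompletelyMetrizable G
  obtain ⟨g₀, hC⟩ := hcomeager
  intro g
  set C : Set G := {x : G | ∃ h : G, h * g₀ * h⁻¹ = x} with hCdef
  -- D = g • C is residual
  have hD : (fun x => g⁻¹ * x) ⁻¹' C ∈ residual G := by
    have hmap := (Homeomorph.mulLeft g).residual_map_eq
    have : (fun x => g⁻¹ * x) ⁻¹' C ∈ (residual G).map (Homeomorph.mulLeft g) := by
      rw [Filter.mem_map]
      have : (Homeomorph.mulLeft g) ⁻¹' ((fun x => g⁻¹ * x) ⁻¹' C) = C := by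
        ext x
        simp [Homeomorph.mulLeft]
      rw [this]; exact hC
    rwa [hmap] at this
  have hne : (C ∩ (fun x => g⁻¹ * x) ⁻¹' C).Nonempty := by
    have := dense_of_mem_residual (Filter.inter_mem hC hD)
    exact this.nonempty
  obtain ⟨y, ⟨h, hh⟩, k, hk⟩ := hne
  -- y = h g₀ h⁻¹,  g⁻¹ y = k g₀ k⁻¹, so g = y (g⁻¹ y)⁻¹ = h g₀ h⁻¹ k g₀⁻¹ k⁻¹
  have hg : g = h * g₀ * h⁻¹ * (k * g₀⁻¹ * k⁻¹) := by
    have : g⁻¹ * y = k * g₀ * k⁻¹ := hk.symm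
    have h2 : y = h * g₀ * h⁻¹ := hh.symm
    have : g = y * (k * g₀ * k⁻¹)⁻¹ := by
      rw [← this]; group
    rw [this, h2]; group
  refine ⟨h * g₀ * h⁻¹, k * h⁻¹, ?_⟩
  rw [hg]; group
end
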